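/- arXiv:2510.15660 — 4 statements merged into one kernel-verified Lean document; each statement's English description precedes it below -/
import Mathlib

section
/- Let G_w be an edge-weighted graph in which e = {x_{n-1}, x_n} is a leaf edge with trivial weight, i.e., x_n has unique neighbor x_{n-1} in G and w(e) = 1. Then for all t ≥ 2, I(G_w)^t : (x_{n-1} x_n) = I(G_w)^{t-1}. -/
open MvPolynomial

/-- The edge ideal of an edge-weighted graph `G_w`:
`I(G_w) = (x^{w(xy)} y^{w(xy)} : {x,y} ∈ E(G))`. -/
noncomputable def edgeIdealW {V K : Type*} [Field K] (G : SimpleGraph V) (w : V → V → ℕ) :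
    Ideal (MvPolynomial V K) :=
  Ideal.span {p | ∃ i j, G.Adj i j ∧ p = (X i * X j) ^ w i j}

namespace ColonLeafAux

variable {V : Type*} (G : SimpleGraph V) (w : V → V → ℕ)

/-- Exponent vectors of the generators of the edge ideal. -/
def Egen : Set (V →₀ ℕ) :=
  {d | ∃ i j, G.Adj i j ∧ d = w i j • (Finsupp.single i 1 + Finsupp.single j 1)}

/-- Exponent vectors of products of `t` generators. -/
def Tset : ℕ → Set (V →₀ ℕ)
  | 0 => {0}
  | n + 1 => {d | ∃ s ∈ Tset n, ∃ e ∈ Egen G w, d = s + e}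

variable {K : Type*} [Field K]

lemma gen_eq (i j : V) (n : ℕ) :
    ((X i * X j : MvPolynomial V K)) ^ n
      = monomial (n • (Finsupp.single i 1 + Finsupp.single j 1)) (1 : K) := by
  rw [mul_pow, X_pow_eq_monomial, X_pow_eq_monomial, monomial_mul, one_mul]
  congr 1
  rw [smul_add, Finsupp.smul_single, Finsupp.smul_single, smul_eq_mul, mul_one]

lemma edgeIdealW_eq :
    edgeIdealW (K := K) G w = Ideal.span ((fun d => monomial d (1 : K)) '' Egen G w) := by
  unfold edgeIdealW
  congr 1
  ext p
  constructor
  · rintro ⟨i, j, hij, rfl⟩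
    exact ⟨w i j • (Finsupp.single i 1 + Finsupp.single j 1), ⟨i, j, hij, rfl⟩,
      (gen_eq i j (w i j)).symm⟩
  · rintro ⟨d, ⟨i, j, hij, rfl⟩, rfl⟩
    exact ⟨i, j, hij, (gen_eq i j (w i j)).symm⟩

lemma pow_eq (t : ℕ) :
    edgeIdealW (K := K) G w ^ t = Ideal.span ((fun d => monomial d (1 : K)) '' Tset G w t) := by
  induction t with
  | zero =>
      rw [pow_zero]
      have : Tset G w 0 = {0} := rfl
      rw [this, Set.image_singleton]
      rw [show (monomial (0 : V →₀ ℕ) (1 : K)) = 1 from by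
        rw [monomial_zero', C_1]]
      rw [Ideal.span_singleton_one, Ideal.one_eq_top]
  | succ n ih =>
      rw [pow_succ, ih, edgeIdealW_eq, Ideal.span_mul_span']
      congr 1
      ext p
      constructor
      · rintro ⟨x, ⟨d, hd, rfl⟩, y, ⟨e, he, rfl⟩, rfl⟩
        exact ⟨d + e, ⟨d, hd, e, he, rfl⟩, by simp [monomial_mul]⟩
      · rintro ⟨q, ⟨s, hs, e, he, rfl⟩, rfl⟩
        exact ⟨monomial s 1, ⟨s, hs, rfl⟩, monomial e 1, ⟨e, he, rfl⟩,
          by simp [monomial_mul]⟩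

lemma drop (P : (V →₀ ℕ) → Prop) (hP : ∀ x y, P (x + y) → P x ∨ P y) (h0 : ¬ P 0) :
    ∀ n s, s ∈ Tset G w (n + 1) → P s →
      ∃ s' ∈ Tset G w n, ∃ e ∈ Egen G w, s = s' + e ∧ P e := by
  intro n
  induction n with
  | zero =>
      rintro s ⟨s₀, hs₀, e, he, rfl⟩ hs
      have hs0 : s₀ = 0 := hs₀
      subst hs0
      rw [zero_add] at hs
      exact ⟨0, rfl, e, he, rfl, hs⟩
  | succ m ih =>
      rintro s ⟨s₀, hs₀, e, he, rfl⟩ hs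
      rcases hP _ _ hs with h | h
      · obtain ⟨s₁, hs₁, e', he', rfl, hPe'⟩ := ih s₀ hs₀ h
        exact ⟨s₁ + e, ⟨s₁, hs₁, e, he, rfl⟩, e', he', by rw [add_right_comm], hPe'⟩
      · exact ⟨s₀, hs₀, e, he, rfl, h⟩

lemma core (hsymm : ∀ i j, w i j = w j i) (a b : V) (hab : G.Adj a b)
    (hleaf : ∀ c, G.Adj c b → c = a) (hw : w a b = 1) :
    ∀ n (u s : V →₀ ℕ), s ∈ Tset G w (n + 1) →
      s ≤ u + (Finsupp.single a 1 + Finsupp.single b 1) →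
      ∃ s' ∈ Tset G w n, s' ≤ u := by
  intro n u s hs hle
  have hne : a ≠ b := hab.ne
  set ab : V →₀ ℕ := Finsupp.single a 1 + Finsupp.single b 1 with hab_def
  have hab_a : ab a = 1 := by
    simp [hab_def, Finsupp.single_apply, hne, Ne.symm hne]
  have hab_b : ab b = 1 := by
    simp [hab_def, Finsupp.single_apply, hne, Ne.symm hne]
  have hab_other : ∀ v, v ≠ a → v ≠ b → ab v = 0 := by
    intro v hva hvb
    simp [hab_def, Finsupp.single_apply, Ne.symm hva, Ne.symm hvb]
  have hle' : ∀ v, s v ≤ u v + ab v := by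
    intro v
    have h := Finsupp.le_def.mp hle v
    rwa [Finsupp.add_apply] at h
  have hposadd : ∀ (c : V) (x y : V →₀ ℕ), 0 < (x + y) c → 0 < x c ∨ 0 < y c := by
    intro c x y h
    rw [Finsupp.add_apply] at h
    omega
  have hzero : ∀ c : V, ¬ (0 < (0 : V →₀ ℕ) c) := by simp
  by_cases hb : 0 < s b
  · obtain ⟨s', hs', e, he, hse, hPe⟩ :=
      drop G w (fun d => 0 < d b) (hposadd b) (hzero b) n s hs hb
    have hPe' : 0 < e b := hPe
    -- e has positive `b`-coordinate, hence `e = ab`.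
    obtain ⟨i, j, hij, rfl⟩ := he
    have heab : w i j • (Finsupp.single i 1 + Finsupp.single j 1) = ab := by
      have hb' : i = b ∨ j = b := by
        by_contra hcon
        push_neg at hcon
        have hz : ((w i j • (Finsupp.single i 1 + Finsupp.single j 1) : V →₀ ℕ)) b = 0 := by
          simp [Finsupp.single_apply, hcon.1, hcon.2]
        rw [hz] at hPe'
        exact absurd hPe' (lt_irrefl 0)
      rcases hb' with hib | hjb
      · have hja : j = a := hleaf j (hib ▸ hij).symm
        rw [hib, hja, hsymm b a, hw, one_smul, hab_def]
        exact add_comm _ _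
      · have hia : i = a := hleaf i (hjb ▸ hij)
        rw [hjb, hia, hw, one_smul, hab_def]
    rw [heab] at hse
    refine ⟨s', hs', ?_⟩
    rw [Finsupp.le_def]
    intro v
    have h1 := hle' v
    rw [hse, Finsupp.add_apply] at h1
    omega
  · have hb0 : s b = 0 := by omega
    by_cases ha : s a ≤ u a
    · have hsu : ∀ v, s v ≤ u v := by
        intro v
        have h1 := hle' v
        by_cases hva : v = a
        · subst hva; exact ha
        · by_cases hvb : v = b
          · subst hvb; omega
          · rw [hab_other v hva hvb] at h1; omega
      obtain ⟨s', hs', e, he, hse⟩ := hs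
      refine ⟨s', hs', ?_⟩
      rw [Finsupp.le_def]
      intro v
      have h2 : s v = s' v + e v := by rw [hse, Finsupp.add_apply]
      have := hsu v
      omega
    · have hsa : 0 < s a := by omega
      obtain ⟨s', hs', e, he, hse, hPe⟩ :=
        drop G w (fun d => 0 < d a) (hposadd a) (hzero a) n s hs hsa
      have hPe' : 0 < e a := hPe
      refine ⟨s', hs', ?_⟩
      rw [Finsupp.le_def]
      intro v
      have h1 := hle' v
      have h2 : s v = s' v + e v := by rw [hse, Finsupp.add_apply]
      have h3 : s b = s' b + e b := by rw [hse, Finsupp.add_apply]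
      by_cases hva : v = a
      · subst hva
        rw [hab_a] at h1
        omega
      · by_cases hvb : v = b
        · subst hvb
          omega
        · rw [hab_other v hva hvb] at h1
          omega

end ColonLeafAux

/-- If `{a,b}` is a leaf edge of `G_w` with trivial weight (i.e. `b` has
unique neighbour `a` and `w(ab) = 1`), then for all `t ≥ 2`,
`I(G_w)^t : (x_a x_b) = I(G_w)^{t-1}`. -/
theorem colon_leaf_edge {V K : Type*} [Field K] (G : SimpleGraph V) (w : V → V → ℕ)
    (hsymm : ∀ i j, w i j = w j i) (hpos : ∀ i j, G.Adj i j → 0 < w i j)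
    (a b : V) (hab : G.Adj a b) (hleaf : ∀ c, G.Adj c b → c = a) (hw : w a b = 1)
    (t : ℕ) (ht : 2 ≤ t) :
    (edgeIdealW (K := K) G w ^ t).colon ((Ideal.span {X a * X b} : Ideal (MvPolynomial V K)) : Set (MvPolynomial V K)) =
      edgeIdealW (K := K) G w ^ (t - 1) := by
  classical
  open ColonLeafAux in
  have hXab : (X a * X b : MvPolynomial V K)
      = monomial (Finsupp.single a 1 + Finsupp.single b 1) 1 := by
    have := gen_eq (K := K) a b 1
    rwa [pow_one, one_smul] at this
  have hn : t = (t - 1) + 1 := by omega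
  apply le_antisymm
  · intro f hf
    rw [Ideal.mem_colon_span_singleton] at hf
    rw [ColonLeafAux.pow_eq] at hf ⊢
    rw [mem_ideal_span_monomial_image] at hf ⊢
    intro d hd
    have hd' : d + (Finsupp.single a 1 + Finsupp.single b 1)
        ∈ (f * (X a * X b)).support := by
      rw [hXab, mem_support_iff, coeff_mul_monomial, mul_one]
      exact mem_support_iff.mp hd
    obtain ⟨s, hs, hle⟩ := hf _ hd'
    rw [hn] at hs
    exact ColonLeafAux.core G w hsymm a b hab hleaf hw (t - 1) d s hs hle
  · intro f hf
    rw [Ideal.mem_colon_span_singleton]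
    have hXabI : (X a * X b : MvPolynomial V K) ∈ edgeIdealW (K := K) G w :=
      Ideal.subset_span ⟨a, b, hab, by rw [hw, pow_one]⟩
    have ht' : edgeIdealW (K := K) G w ^ t
        = edgeIdealW (K := K) G w ^ (t - 1) * edgeIdealW (K := K) G w := by
      conv_lhs => rw [hn]
      rw [pow_succ]
    rw [ht']
    exact Ideal.mul_mem_mul hf hXabI
end

section
/- Let G_w be an edge-weighted graph where x_n is a leaf of G with unique neighbor x_{n-1}, and let f be a nonzero monomial of S whose support is disjoint from {n-1, n}. Then for all t ≥ 1, I(G_w)^t : f ⊆ (I(H_w)^t : f) + I(G_w), where H is the induced subgraph of G on V(G) \ {x_n}. -/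
open MvPolynomial

/-- The induced subgraph of `G` on `V(G) \ {b}`, kept on the same vertex type. -/
def deleteVertex {V : Type*} (G : SimpleGraph V) (b : V) : SimpleGraph V where
  Adj i j := G.Adj i j ∧ i ≠ b ∧ j ≠ b
  symm := ⟨fun i j ⟨h, hi, hj⟩ => ⟨h.symm, hj, hi⟩⟩
  loopless := ⟨fun i ⟨h, _, _⟩ => G.ne_of_adj h rfl⟩

/-- `t`-fold pointwise sumset of a set of exponent vectors. -/
def sumPow {V : Type*} (A : Set (V →₀ ℕ)) : ℕ → Set (V →₀ ℕ)
  | 0 => {0}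
  | n + 1 => Set.image2 (· + ·) (sumPow A n) A

/-- The exponent set of the weighted edge ideal. -/
def edgeExp {V : Type*} (G : SimpleGraph V) (w : V → V → ℕ) : Set (V →₀ ℕ) :=
  {s | ∃ i j, G.Adj i j ∧ s = Finsupp.single i (w i j) + Finsupp.single j (w i j)}

lemma edgeIdealW_eq_span {V K : Type*} [Field K] (G : SimpleGraph V) (w : V → V → ℕ) :
    edgeIdealW (K := K) G w
      = Ideal.span ((fun s => monomial s (1 : K)) '' edgeExp G w) := by
  unfold edgeIdealW
  congr 1
  ext p
  constructor
  · rintro ⟨i, j, hij, rfl⟩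
    exact ⟨Finsupp.single i (w i j) + Finsupp.single j (w i j), ⟨i, j, hij, rfl⟩,
      by rw [mul_pow, X_pow_eq_monomial, X_pow_eq_monomial, monomial_mul, mul_one]⟩
  · rintro ⟨s, ⟨i, j, hij, rfl⟩, rfl⟩
    exact ⟨i, j, hij, by rw [mul_pow, X_pow_eq_monomial, X_pow_eq_monomial, monomial_mul,
      mul_one]⟩

lemma span_monomial_pow {V K : Type*} [Field K] (A : Set (V →₀ ℕ)) (t : ℕ) :
    Ideal.span ((fun s => monomial s (1 : K)) '' A) ^ t
      = Ideal.span ((fun s => monomial s (1 : K)) '' sumPow A t) := by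
  induction t with
  | zero =>
    simp only [pow_zero, sumPow, Set.image_singleton, monomial_zero', map_one,
      Ideal.span_singleton_one, Ideal.one_eq_top]
  | succ n ih =>
    rw [pow_succ, ih, Ideal.span_mul_span']
    congr 1
    show _ = (fun s => monomial s (1 : K)) '' Set.image2 (· + ·) (sumPow A n) A
    rw [← Set.image2_mul, Set.image2_image_left, Set.image2_image_right, Set.image_image2]
    exact Set.image2_congr fun x _ y _ => by rw [monomial_mul, mul_one]

lemma key_cases {V : Type*} (G : SimpleGraph V) (w : V → V → ℕ)
    (hsymm : ∀ i j, w i j = w j i)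
    (a b : V) (hleaf : ∀ c, G.Adj c b → c = a) :
    ∀ t, ∀ s ∈ sumPow (edgeExp G w) t,
      s ∈ sumPow (edgeExp (deleteVertex G b) w) t ∨ (w a b ≤ s a ∧ w a b ≤ s b) := by
  intro t
  induction t with
  | zero => intro s hs; exact Or.inl hs
  | succ n ih =>
    rintro s hs
    obtain ⟨x, hx, e, ⟨i, j, hij, rfl⟩, rfl⟩ := hs
    rcases eq_or_ne j b with hjb | hjb
    · have hia : i = a := hleaf i (hjb ▸ hij)
      have hne2 : a ≠ b := by rw [hia, hjb] at hij; exact hij.ne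
      right
      rw [hia, hjb]
      refine ⟨?_, ?_⟩ <;>
        simp [Finsupp.add_apply, Finsupp.single_apply, hne2, Ne.symm hne2]
    · rcases eq_or_ne i b with hib | hib
      · have hja : j = a := hleaf j (hib ▸ hij).symm
        have hne2 : b ≠ a := by rw [hib, hja] at hij; exact hij.ne
        right
        rw [hib, hja, hsymm b a]
        refine ⟨?_, ?_⟩ <;>
          simp [Finsupp.add_apply, Finsupp.single_apply, hne2, Ne.symm hne2]
      · rcases ih x hx with hxH | ⟨h1, h2⟩
        · exact Or.inl ⟨x, hxH, _, ⟨i, j, (show G.Adj i j ∧ i ≠ b ∧ j ≠ b from ⟨hij, hib, hjb⟩), rfl⟩, rfl⟩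
        · exact Or.inr ⟨h1.trans (by simp [Finsupp.add_apply]),
            h2.trans (by simp [Finsupp.add_apply])⟩

/-- Let `b` be a leaf of `G` with unique neighbour `a`, and let `f` be a
nonzero monomial whose support avoids `a` and `b`.  Then for all `t ≥ 1`,
`I(G_w)^t : f ⊆ (I(H_w)^t : f) + I(G_w)`, where `H` is the induced subgraph of `G` on
`V(G) \ {b}`. -/
theorem colon_subset_deleteLeaf {V K : Type*} [Field K]
    (G : SimpleGraph V) (w : V → V → ℕ)
    (hsymm : ∀ i j, w i j = w j i) (hpos : ∀ i j, G.Adj i j → 0 < w i j)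
    (a b : V) (hab : G.Adj a b) (hleaf : ∀ c, G.Adj c b → c = a)
    (d : V →₀ ℕ) (hda : d a = 0) (hdb : d b = 0)
    (t : ℕ) (ht : 1 ≤ t) :
    (edgeIdealW (K := K) G w ^ t).colon (Ideal.span {monomial d (1 : K)}) ≤
      (edgeIdealW (K := K) (deleteVertex G b) w ^ t).colon
          (Ideal.span {monomial d (1 : K)}) ⊔
        edgeIdealW (K := K) G w := by
  classical
  intro u hu
  have huf : u * monomial d (1 : K) ∈ edgeIdealW (K := K) G w ^ t :=
    Ideal.mem_colon_span_singleton.mp hu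
  rw [edgeIdealW_eq_span, span_monomial_pow, mem_ideal_span_monomial_image] at huf
  have hab_ne : a ≠ b := hab.ne
  -- decompose u into monomials
  rw [MvPolynomial.as_sum u]
  refine Ideal.sum_mem _ fun e he => ?_
  have hcoeff : coeff e u ≠ 0 := mem_support_iff.mp he
  have hmem : e + d ∈ (u * monomial d (1 : K)).support := by
    rw [mem_support_iff, coeff_mul_monomial, mul_one]; exact hcoeff
  obtain ⟨s, hs, hle⟩ := huf _ hmem
  rcases key_cases G w hsymm a b hleaf t s hs with hsH | ⟨h1, h2⟩
  · -- monomial lands in (J^t : f)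
    refine Ideal.mem_sup_left (Ideal.mem_colon_span_singleton.mpr ?_)
    rw [edgeIdealW_eq_span, span_monomial_pow, mem_ideal_span_monomial_image]
    intro xi hxi
    rw [monomial_mul, mul_one, support_monomial, if_neg hcoeff] at hxi
    rw [Finset.mem_singleton] at hxi
    subst hxi
    exact ⟨s, hsH, hle⟩
  · -- monomial is divisible by the edge (a b)
    refine Ideal.mem_sup_right ?_
    have hga : w a b ≤ e a := by
      have := hle a
      simpa [Finsupp.add_apply, hda] using h1.trans this
    have hgb : w a b ≤ e b := by
      have := hle b
      simpa [Finsupp.add_apply, hdb] using h2.trans this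
    set q : V →₀ ℕ := Finsupp.single a (w a b) + Finsupp.single b (w a b) with hq
    have hqe : q ≤ e := by
      rw [Finsupp.le_def]
      intro i
      rcases eq_or_ne i a with hia | hia
      · rw [hia]
        simpa [hq, Finsupp.add_apply, Finsupp.single_apply, hab_ne, Ne.symm hab_ne] using hga
      · rcases eq_or_ne i b with hib | hib
        · rw [hib]
          simpa [hq, Finsupp.add_apply, Finsupp.single_apply, hab_ne, Ne.symm hab_ne] using hgb
        · simp [hq, Finsupp.add_apply, Finsupp.single_apply, Ne.symm hia, Ne.symm hib]
    have hgen : (X a * X b : MvPolynomial V K) ^ w a b ∈ edgeIdealW (K := K) G w :=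
      Ideal.subset_span ⟨a, b, hab, rfl⟩
    have hfact : monomial e (coeff e u)
        = monomial (e - q) (coeff e u) * (X a * X b : MvPolynomial V K) ^ w a b := by
      rw [mul_pow, X_pow_eq_monomial, X_pow_eq_monomial, monomial_mul, mul_one,
        monomial_mul, mul_one, ← hq, tsub_add_cancel_of_le hqe]
    rw [hfact]
    exact Ideal.mul_mem_left _ _ hgen
end

section
/- Let n ≥ 6, 3 ≤ a ≤ ⌊n/2⌋, ω > 1, 3 ≤ t ≤ n - 3, and write t - 3 = c + d with 0 ≤ c ≤ a - 3 and 0 ≤ d ≤ n - a - 3. Let I = (u_1,...,u_{a-1}, u_a^ω, u_{a+1},...,u_{n-1}) with u_j = x_j x_{j+1}, and h = u_a^ω · x_{a-1} · x_{a+2} · (∏_{i=a-c-1}^{a-2} u_i) · (∏_{i=a+2}^{a+d+1} u_i). Then I^t : h = I + (x_{a-2i-1} : 0 ≤ i ≤ ⌈c/2⌉) + (x_{a+2i+2} : 0 ≤ i ≤ ⌈d/2⌉) + I(K_{U,V}), where U = {x_{a-c-2},...,x_a} \ {x_{a-2i-1} : 0 ≤ i ≤ ⌈c/2⌉} and V =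 {x_{a+1},...,x_{a+d+3}} \ {x_{a+2i+2} : 0 ≤ i ≤ ⌈d/2⌉}. -/
open MvPolynomial Finset

/-- The variable `x_i` of `K[x_1,…,x_n]` (1-based indexing). -/
noncomputable def Xv (n : ℕ) (K : Type*) [Field K] (i : ℕ) : MvPolynomial (Fin n) K :=
  if h : 1 ≤ i ∧ i ≤ n then X ⟨i - 1, by omega⟩ else 0

/-- `u_j = x_j x_{j+1}`. -/
noncomputable def pu (n : ℕ) (K : Type*) [Field K] (j : ℕ) : MvPolynomial (Fin n) K :=
  Xv n K j * Xv n K (j + 1)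

/-- The edge ideal `I = (u_1,…,u_{a-1}, u_a^ω, u_{a+1},…,u_{n-1})` of the edge-weighted
path with a single non-trivial weight `ω` at position `a`. -/
noncomputable def pathIdeal1 (n : ℕ) (K : Type*) [Field K] (a ω : ℕ) :
    Ideal (MvPolynomial (Fin n) K) :=
  Ideal.span {p | ∃ j, 1 ≤ j ∧ j ≤ n - 1 ∧ p = pu n K j ^ (if j = a then ω else 1)}

namespace StmtEleven


variable {σ K : Type*} [Field K]

/-- t-fold sumset. -/
def sumSet (A : Set (σ →₀ ℕ)) : ℕ → Set (σ →₀ ℕ)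
  | 0 => {0}
  | t+1 => {x | ∃ a ∈ A, ∃ y ∈ sumSet A t, x = a + y}

lemma span_monomial_mul (A B : Set (σ →₀ ℕ)) :
    Ideal.span ((fun s => monomial s (1:K)) '' A) * Ideal.span ((fun s => monomial s (1:K)) '' B)
      = Ideal.span ((fun s => monomial s (1:K)) '' {x | ∃ a ∈ A, ∃ b ∈ B, x = a + b}) := by
  rw [Ideal.span_mul_span']
  congr 1
  ext p
  constructor
  · rintro ⟨_, ⟨u, hu, rfl⟩, _, ⟨v, hv, rfl⟩, rfl⟩
    exact ⟨u + v, ⟨u, hu, v, hv, rfl⟩, (monomial_mul.trans (by rw [one_mul])).symm⟩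
  · rintro ⟨_, ⟨u, hu, v, hv, rfl⟩, rfl⟩
    exact ⟨_, ⟨u, hu, rfl⟩, _, ⟨v, hv, rfl⟩, monomial_mul.trans (by rw [one_mul])⟩

lemma span_monomial_pow (A : Set (σ →₀ ℕ)) (t : ℕ) :
    Ideal.span ((fun s => monomial s (1:K)) '' A) ^ t
      = Ideal.span ((fun s => monomial s (1:K)) '' sumSet A t) := by
  induction t with
  | zero =>
      rw [pow_zero, sumSet, Set.image_singleton]
      simp [monomial_zero', Ideal.span_singleton_one]
  | succ t ih =>
      rw [pow_succ, ih, mul_comm, span_monomial_mul]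
      rfl

lemma colon_span_monomial (A : Set (σ →₀ ℕ)) (k : σ →₀ ℕ) :
    (Ideal.span ((fun s => monomial s (1:K)) '' A)).colon
      ((Ideal.span {monomial k (1:K)} : Ideal (MvPolynomial σ K)) : Set (MvPolynomial σ K)) =
      Ideal.span ((fun s => monomial s (1:K)) '' ((· - k) '' A)) := by
  ext f
  rw [Ideal.mem_colon_span_singleton, mem_ideal_span_monomial_image,
    mem_ideal_span_monomial_image]
  constructor
  · intro H e he
    have hco : coeff (e + k) (f * monomial k 1) ≠ 0 := by
      rw [coeff_mul_monomial, mul_one]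
      exact mem_support_iff.mp he
    obtain ⟨s, hs, hle⟩ := H _ (mem_support_iff.mpr hco)
    exact ⟨s - k, ⟨s, hs, rfl⟩, tsub_le_iff_right.mpr hle⟩
  · rintro H e he
    have hco := mem_support_iff.mp he
    rw [coeff_mul_monomial'] at hco
    by_cases hk : k ≤ e
    · rw [if_pos hk, mul_one] at hco
      obtain ⟨_, ⟨s, hs, rfl⟩, hle⟩ := H _ (mem_support_iff.mpr hco)
      refine ⟨s, hs, ?_⟩
      calc s ≤ (e - k) + k := tsub_le_iff_right.mp hle
      _ = e := tsub_add_cancel_of_le hk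
    · rw [if_neg hk] at hco; exact absurd rfl hco

lemma span_monomial_le {A B : Set (σ →₀ ℕ)} (h : ∀ a ∈ A, ∃ b ∈ B, b ≤ a) :
    Ideal.span ((fun s => monomial s (1:K)) '' A) ≤
      Ideal.span ((fun s => monomial s (1:K)) '' B) := by
  classical
  rw [Ideal.span_le]
  rintro _ ⟨s, hs, rfl⟩
  refine SetLike.mem_coe.mpr (mem_ideal_span_monomial_image.mpr ?_)
  intro e he
  rw [support_monomial, if_neg one_ne_zero, Finset.mem_singleton] at he
  exact he ▸ h s hs

lemma span_monomial_eq {A B : Set (σ →₀ ℕ)} (h1 : ∀ a ∈ A, ∃ b ∈ B, b ≤ a)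
    (h2 : ∀ b ∈ B, ∃ a ∈ A, a ≤ b) :
    Ideal.span ((fun s => monomial s (1:K)) '' A) =
      Ideal.span ((fun s => monomial s (1:K)) '' B) :=
  le_antisymm (span_monomial_le h1) (span_monomial_le h2)

lemma mem_sumSet_add {A : Set (σ →₀ ℕ)} {x y : σ →₀ ℕ} {s t : ℕ}
    (hx : x ∈ sumSet A s) (hy : y ∈ sumSet A t) : x + y ∈ sumSet A (s + t) := by
  induction s generalizing x with
  | zero => rw [sumSet] at hx; simp only [Set.mem_singleton_iff] at hx; subst hx
            rw [zero_add, zero_add]; exact hy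
  | succ s ih =>
      obtain ⟨a, ha, z, hz, rfl⟩ := hx
      rw [Nat.succ_add]
      exact ⟨a, ha, z + y, ih hz, by rw [add_assoc]⟩

lemma sum_smul_mem_sumSet {A : Set (σ →₀ ℕ)} {S : Finset ℕ} {F : ℕ → (σ →₀ ℕ)} {cm : ℕ → ℕ}
    (h : ∀ j ∈ S, F j ∈ A) :
    (∑ j ∈ S, cm j • F j) ∈ sumSet A (∑ j ∈ S, cm j) := by
  classical
  induction S using Finset.cons_induction with
  | empty => simp [sumSet]
  | cons j S hj ih =>
      rw [Finset.sum_cons, Finset.sum_cons]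
      refine mem_sumSet_add ?_ (ih fun i hi => h i (Finset.mem_cons.mpr (Or.inr hi)))
      have hFj : F j ∈ A := h j (Finset.mem_cons.mpr (Or.inl rfl))
      clear ih h
      induction cm j with
      | zero => simp [sumSet]
      | succ N ihn => rw [succ_nsmul]; exact mem_sumSet_add ihn ⟨F j, hFj, 0, by simp [sumSet], by simp [sumSet]⟩

lemma sumSet_decompose {n : ℕ} {A : Set (σ →₀ ℕ)} {G : ℕ → (σ →₀ ℕ)}
    (hA : A = {x | ∃ j, 1 ≤ j ∧ j ≤ n ∧ x = G j}) {t : ℕ} {x : σ →₀ ℕ}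
    (hx : x ∈ sumSet A t) :
    ∃ m : ℕ → ℕ, (∀ j, m j ≠ 0 → 1 ≤ j ∧ j ≤ n) ∧ (∑ j ∈ Icc 1 n, m j) = t ∧
      x = ∑ j ∈ Icc 1 n, m j • G j := by
  classical
  induction t generalizing x with
  | zero =>
      rw [sumSet] at hx; simp only [Set.mem_singleton_iff] at hx
      exact ⟨fun _ => 0, by simp, by simp, by simp [hx]⟩
  | succ t ih =>
      obtain ⟨g, hg, y, hy, rfl⟩ := hx
      obtain ⟨m, hm1, hm2, hm3⟩ := ih hy
      rw [hA] at hg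
      obtain ⟨j0, hj1, hj2, rfl⟩ := hg
      refine ⟨fun j => (if j = j0 then 1 else 0) + m j, ?_, ?_, ?_⟩
      · intro j hj
        rcases eq_or_ne j j0 with rfl | hne
        · exact ⟨hj1, hj2⟩
        · exact hm1 j (by simpa [hne] using hj)
      · rw [Finset.sum_add_distrib, hm2, Finset.sum_ite_eq' (Icc 1 n) j0 (fun _ => 1),
          if_pos (Finset.mem_Icc.mpr ⟨hj1, hj2⟩)]
        omega
      · rw [hm3]
        have : ∀ j, ((if j = j0 then 1 else 0) + m j) • G j
            = (if j = j0 then G j0 else 0) + m j • G j := by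
          intro j
          rcases eq_or_ne j j0 with rfl | hne
          · simp [add_smul]
          · simp [hne]
        simp only [this]
        rw [Finset.sum_add_distrib, Finset.sum_ite_eq' (Icc 1 n) j0 (fun _ => G j0),
          if_pos (Finset.mem_Icc.mpr ⟨hj1, hj2⟩)]



/-- delta vector at position `i` (1-based), zero out of range. -/
noncomputable def dd (n i : ℕ) : Fin n →₀ ℕ :=
  if h : 1 ≤ i ∧ i ≤ n then Finsupp.single ⟨i - 1, by omega⟩ 1 else 0

/-- edge vector `δ_j + δ_{j+1}`. -/
noncomputable def ee (n j : ℕ) : Fin n →₀ ℕ := dd n j + dd n (j + 1)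

/-- generator vector of the weighted edge ideal. -/
noncomputable def gg (n a ω j : ℕ) : Fin n →₀ ℕ := (if j = a then ω else 1) • ee n j

/-- chain vector `∑_{i=l}^{r} e_i`. -/
noncomputable def ch (n l r : ℕ) : Fin n →₀ ℕ := ∑ i ∈ Icc l r, ee n i

/-- pair block `∑_{i<N} 2 e_{x+2i}`. -/
noncomputable def pb (n x N : ℕ) : Fin n →₀ ℕ := ∑ i ∈ range N, (2 : ℕ) • ee n (x + 2 * i)

lemma dd_apply {n i : ℕ} (h1 : 1 ≤ i) (h2 : i ≤ n) (b : Fin n) :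
    dd n i b = if i = b.1 + 1 then 1 else 0 := by
  rw [dd, dif_pos ⟨h1, h2⟩, Finsupp.single_apply]
  have hb := b.2
  by_cases h : i = b.1 + 1
  · rw [if_pos (Fin.ext (by omega : i - 1 = b.1)), if_pos h]
  · rw [if_neg (fun he => h (by have := congrArg Fin.val he; simp at this; omega)), if_neg h]

lemma ee_apply {n j : ℕ} (h1 : 1 ≤ j) (h2 : j + 1 ≤ n) (b : Fin n) :
    ee n j b = (if j = b.1 + 1 then 1 else 0) + (if j + 1 = b.1 + 1 then 1 else 0) := by
  rw [ee, Finsupp.add_apply, dd_apply h1 (by omega), dd_apply (by omega) h2]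

lemma sum_dd_apply {n : ℕ} (l r : ℕ) (hl : 1 ≤ l) (hr : r ≤ n) (b : Fin n) :
    (∑ v ∈ Icc l r, dd n v) b = if l ≤ b.1 + 1 ∧ b.1 + 1 ≤ r then 1 else 0 := by
  rw [Finsupp.finset_sum_apply]
  rw [Finset.sum_congr rfl (fun v hv =>
    dd_apply (by have := mem_Icc.mp hv; omega) (by have := mem_Icc.mp hv; omega) b)]
  rw [Finset.sum_ite_eq' (Icc l r) (b.1 + 1) (fun _ => 1)]
  simp [Finset.mem_Icc]

lemma ch_apply {n : ℕ} (l r : ℕ) (hl : 1 ≤ l) (hr : r + 1 ≤ n) (b : Fin n) :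
    ch n l r b = (if l ≤ b.1 + 1 ∧ b.1 + 1 ≤ r then 1 else 0)
      + (if l + 1 ≤ b.1 + 1 ∧ b.1 + 1 ≤ r + 1 then 1 else 0) := by
  have hsplit : ch n l r = (∑ v ∈ Icc l r, dd n v) + (∑ v ∈ Icc (l+1) (r+1), dd n v) := by
    simp only [ch, ee, Finset.sum_add_distrib]
    congr 1
    rw [← Finset.map_add_right_Icc l r 1, Finset.sum_map]
    rfl
  rw [hsplit, Finsupp.add_apply, sum_dd_apply l r hl (by omega) b,
    sum_dd_apply (l+1) (r+1) (by omega) hr b]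

lemma pb_apply {n : ℕ} (x N : ℕ) (hx : 1 ≤ x) (hN : x + 2 * N ≤ n + 1) (b : Fin n) :
    pb n x N b = if x ≤ b.1 + 1 ∧ b.1 + 1 ≤ x + 2 * N - 1 then 2 else 0 := by
  induction N with
  | zero =>
      rw [pb, Finset.range_zero, Finset.sum_empty]
      rw [if_neg (by omega)]
      rfl
  | succ N ih =>
      rw [pb, Finset.sum_range_succ, ← pb, Finsupp.add_apply,
        ih (by omega), Finsupp.smul_apply, ee_apply (by omega) (by omega), smul_eq_mul]
      have hb := b.2
      split_ifs <;> omega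

lemma gg_apply {n a ω : ℕ} (j : ℕ) (h1 : 1 ≤ j) (h2 : j + 1 ≤ n) (b : Fin n) :
    gg n a ω j b = (if j = a then ω else 1) *
      ((if j = b.1 + 1 then 1 else 0) + (if j + 1 = b.1 + 1 then 1 else 0)) := by
  rw [gg, Finsupp.smul_apply, ee_apply h1 h2, smul_eq_mul]



variable {K : Type*} [Field K]

lemma Xv_eq {n i : ℕ} (h1 : 1 ≤ i) (h2 : i ≤ n) :
    Xv n K i = monomial (dd n i) 1 := by
  rw [Xv, dif_pos ⟨h1, h2⟩, dd, dif_pos ⟨h1, h2⟩, X]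

lemma pu_pow_eq {n j : ℕ} (h1 : 1 ≤ j) (h2 : j + 1 ≤ n) (w : ℕ) :
    pu n K j ^ w = monomial (w • ee n j) (1 : K) := by
  rw [pu, Xv_eq h1 (by omega), Xv_eq (by omega) h2, monomial_mul, one_mul, monomial_pow, one_pow]
  rfl

lemma prod_monomial {n : ℕ} (S : Finset ℕ) (F : ℕ → (Fin n →₀ ℕ)) :
    (∏ i ∈ S, monomial (F i) (1 : K)) = monomial (∑ i ∈ S, F i) 1 := by
  classical
  induction S using Finset.cons_induction with
  | empty => simp
  | cons j S hj ih =>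
      rw [Finset.prod_cons, Finset.sum_cons, ih, monomial_mul, one_mul]

lemma prod_pu_eq {n l r : ℕ} (h1 : 1 ≤ l) (h2 : r + 1 ≤ n) :
    (∏ i ∈ Icc l r, pu n K i) = monomial (ch n l r) (1 : K) := by
  rw [Finset.prod_congr rfl (fun i hi => by
    have := mem_Icc.mp hi
    rw [(by rw [pow_one] : pu n K i = pu n K i ^ 1),
      pu_pow_eq (by omega) (by omega) 1, one_smul]), prod_monomial, ch]

/-- the exponent vector of `h`. -/
noncomputable def kv (n a ω c d : ℕ) : Fin n →₀ ℕ :=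
  ω • ee n a + (dd n (a-1) + ch n (a-c-1) (a-2)) + (dd n (a+2) + ch n (a+2) (a+d+1))

lemma h_eq {n a ω c d : ℕ} (ha : 3 ≤ a) (hc : c ≤ a - 3) (hd : a + d + 3 ≤ n) :
    pu n K a ^ ω * Xv n K (a - 1) * Xv n K (a + 2) *
          (∏ i ∈ Icc (a - c - 1) (a - 2), pu n K i) *
          (∏ i ∈ Icc (a + 2) (a + d + 1), pu n K i)
      = monomial (kv n a ω c d) (1 : K) := by
  rw [pu_pow_eq (by omega) (by omega) ω, Xv_eq (by omega) (by omega),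
    Xv_eq (by omega) (by omega), prod_pu_eq (by omega) (by omega),
    prod_pu_eq (by omega) (by omega)]
  rw [monomial_mul, monomial_mul, monomial_mul, monomial_mul]
  rw [one_mul, one_mul, one_mul, one_mul]
  rw [kv]
  congr 1
  abel

def EIset (n a ω : ℕ) : Set (Fin n →₀ ℕ) := {x | ∃ j, 1 ≤ j ∧ j ≤ n - 1 ∧ x = gg n a ω j}

lemma pathIdeal1_eq {n a ω : ℕ} (hn : 2 ≤ n) :
    pathIdeal1 n K a ω = Ideal.span ((fun s => monomial s (1:K)) '' EIset n a ω) := by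
  rw [pathIdeal1]
  congr 1
  ext p
  constructor
  · rintro ⟨j, hj1, hj2, rfl⟩
    refine ⟨gg n a ω j, ⟨j, hj1, hj2, rfl⟩, ?_⟩
    show monomial (gg n a ω j) (1:K) = _
    rw [gg, pu_pow_eq (n := n) hj1 (by omega)]
  · rintro ⟨x, ⟨j, hj1, hj2, rfl⟩, rfl⟩
    refine ⟨j, hj1, hj2, ?_⟩
    show monomial (gg n a ω j) (1:K) = _
    rw [gg, pu_pow_eq (n := n) hj1 (by omega)]




/-- weight of edge `j`. -/
def wt (a ω j : ℕ) : ℕ := if j = a then ω else 1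

/-- coordinate of the sum vector at position `P`. -/
def sf (a ω : ℕ) (m : ℕ → ℕ) (P : ℕ) : ℕ := m (P - 1) * wt a ω (P - 1) + m P * wt a ω P

/-- coordinate of `kv` at position `P`. -/
def kfn (a ω c d P : ℕ) : ℕ :=
  ω * ((if a = P then 1 else 0) + (if a + 1 = P then 1 else 0))
  + ((if a - 1 = P then 1 else 0)
  + ((if a - c - 1 ≤ P ∧ P ≤ a - 2 then 1 else 0)
     + (if a - c - 1 + 1 ≤ P ∧ P ≤ a - 2 + 1 then 1 else 0)))
  + ((if a + 2 = P then 1 else 0)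
  + ((if a + 2 ≤ P ∧ P ≤ a + d + 1 then 1 else 0)
     + (if a + 2 + 1 ≤ P ∧ P ≤ a + d + 1 + 1 then 1 else 0)))

variable {a ω c d : ℕ}

lemma kfn_le_two (ha : 3 ≤ a) {P : ℕ} (h1 : P ≠ a) (h2 : P ≠ a + 1) :
    kfn a ω c d P ≤ 2 := by
  rw [kfn]; split_ifs <;> omega

lemma kfn_outside (ha : 3 ≤ a) (hc : c ≤ a - 3) {P : ℕ}
    (h : P ≤ a - c - 2 ∨ a + d + 3 ≤ P) : kfn a ω c d P = 0 := by
  rw [kfn]; split_ifs <;> omega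

lemma kfn_a (ha : 3 ≤ a) (hc : c ≤ a - 3) : kfn a ω c d a = ω := by
  rw [kfn]; split_ifs <;> omega

lemma kfn_a1 (ha : 3 ≤ a) : kfn a ω c d (a + 1) = ω := by
  rw [kfn]; split_ifs <;> omega

lemma kfn_acm1 (ha : 3 ≤ a) (hc : c ≤ a - 3) : kfn a ω c d (a - c - 1) ≤ 1 := by
  rw [kfn]; split_ifs <;> omega

lemma kfn_acm2 (ha : 3 ≤ a) (hc : c ≤ a - 3) : kfn a ω c d (a - c - 2) = 0 := by
  rw [kfn]; split_ifs <;> omega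

lemma kfn_adp2 (ha : 3 ≤ a) : kfn a ω c d (a + d + 2) ≤ 1 := by
  rw [kfn]; split_ifs <;> omega

lemma kfn_adp3 (ha : 3 ≤ a) : kfn a ω c d (a + d + 3) = 0 := by
  rw [kfn]; split_ifs <;> omega

lemma sum_pairs_left (m : ℕ → ℕ) (B N : ℕ) (h : 2 * N ≤ B + 1) :
    ∑ i ∈ Finset.range N, (m (B - 2 * i - 1) + m (B - 2 * i))
      = ∑ j ∈ Finset.Icc (B + 1 - 2 * N) B, m j := by
  induction N with
  | zero => rw [Finset.range_zero, Finset.sum_empty, Finset.Icc_eq_empty (by omega),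
      Finset.sum_empty]
  | succ N ih =>
      rw [Finset.sum_range_succ, ih (by omega)]
      have hset : Finset.Icc (B + 1 - 2 * (N + 1)) B
          = insert (B - 2 * N - 1) (insert (B - 2 * N) (Finset.Icc (B + 1 - 2 * N) B)) := by
        ext j
        simp only [Finset.mem_Icc, Finset.mem_insert]
        omega
      rw [hset, Finset.sum_insert (by simp only [Finset.mem_Icc, Finset.mem_insert]; omega),
        Finset.sum_insert (by simp only [Finset.mem_Icc]; omega)]
      omega

lemma sum_pairs_right (m : ℕ → ℕ) (B N : ℕ) (hB : 1 ≤ B) :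
    ∑ i ∈ Finset.range N, (m (B + 2 * i) + m (B + 2 * i + 1))
      = ∑ j ∈ Finset.Icc B (B + 2 * N - 1), m j := by
  induction N with
  | zero => rw [Finset.range_zero, Finset.sum_empty, Finset.Icc_eq_empty (by omega),
      Finset.sum_empty]
  | succ N ih =>
      rw [Finset.sum_range_succ, ih]
      have hset : Finset.Icc B (B + 2 * (N + 1) - 1)
          = insert (B + 2 * N) (insert (B + 2 * N + 1) (Finset.Icc B (B + 2 * N - 1))) := by
        ext j
        simp only [Finset.mem_Icc, Finset.mem_insert]
        omega
      rw [hset, Finset.sum_insert (by simp only [Finset.mem_Icc, Finset.mem_insert]; omega),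
        Finset.sum_insert (by simp only [Finset.mem_Icc]; omega)]
      omega

lemma sum_range_le_peel (f : ℕ → ℕ) (M L : ℕ) (h2 : ∀ i, i < M → f i ≤ 2)
    (hl : f M ≤ L) : ∑ i ∈ Finset.range (M + 1), f i ≤ 2 * M + L := by
  rw [Finset.sum_range_succ]
  have h := Finset.sum_le_card_nsmul (Finset.range M) f 2
    (fun i hi => h2 i (Finset.mem_range.mp hi))
  rw [Finset.card_range, smul_eq_mul] at h
  exact le_trans (add_le_add h hl) (by omega)

lemma left_single (ha : 3 ≤ a) (hc : c ≤ a - 3) (m : ℕ → ℕ)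
    (hp : c + 2 ≤ ∑ j ∈ Finset.Icc (a - c - 2) (a - 1), m j) :
    ∃ x, a - c - 2 ≤ x ∧ x ≤ a - 1 ∧ x % 2 ≠ a % 2 ∧
      kfn a ω c d x + 1 ≤ sf a ω m x := by
  by_contra hcon
  push_neg at hcon
  set N := (c + 1) / 2 + 1 with hN
  have key : ∀ i ∈ Finset.range N, sf a ω m (a - 1 - 2 * i) ≤ kfn a ω c d (a - 1 - 2 * i) := by
    intro i hi
    have hi' := Finset.mem_range.mp hi
    have := hcon (a - 1 - 2 * i) (by omega) (by omega) (by omega)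
    omega
  have s1 : ∀ i ∈ Finset.range N,
      sf a ω m (a - 1 - 2 * i) = m ((a - 1) - 2 * i - 1) + m ((a - 1) - 2 * i) := by
    intro i hi
    have hi' := Finset.mem_range.mp hi
    rw [sf, wt, wt, if_neg (by omega), if_neg (by omega)]
    have he : a - 1 - 2 * i - 1 = (a - 1) - 2 * i - 1 := by omega
    rw [he]
    ring
  have s2 : ∑ i ∈ Finset.range N, sf a ω m (a - 1 - 2 * i)
      = ∑ j ∈ Finset.Icc ((a - 1) + 1 - 2 * N) (a - 1), m j := by
    rw [Finset.sum_congr rfl s1, sum_pairs_left m (a - 1) N (by omega)]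
  have s3 : ∑ j ∈ Finset.Icc (a - c - 2) (a - 1), m j
      ≤ ∑ j ∈ Finset.Icc ((a - 1) + 1 - 2 * N) (a - 1), m j :=
    Finset.sum_le_sum_of_subset (Finset.Icc_subset_Icc (by omega) le_rfl)
  have s4 : ∑ i ∈ Finset.range N, kfn a ω c d (a - 1 - 2 * i) ≤ c + 1 := by
    have hlast : kfn a ω c d (a - 1 - 2 * (N - 1)) ≤ c + 1 - 2 * (N - 1) := by
      rcases Nat.even_or_odd c with ⟨e, he⟩ | ⟨e, he⟩
      · have hidx : a - 1 - 2 * (N - 1) = a - c - 1 := by omega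
        have := kfn_acm1 (ω := ω) (d := d) ha hc
        rw [hidx]
        omega
      · have hidx : a - 1 - 2 * (N - 1) = a - c - 2 := by omega
        have := kfn_acm2 (ω := ω) (d := d) ha hc
        rw [hidx]
        omega
    have hpeel := sum_range_le_peel (fun i => kfn a ω c d (a - 1 - 2 * i)) (N - 1)
      (c + 1 - 2 * (N - 1)) (fun i hi => kfn_le_two ha (by omega) (by omega)) hlast
    have hNe : N - 1 + 1 = N := by omega
    rw [hNe] at hpeel
    beta_reduce at hpeel
    omega
  have hsum := Finset.sum_le_sum key
  omega

lemma left_U (ha : 3 ≤ a) (hc : c ≤ a - 3) (m : ℕ → ℕ)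
    (hp : c + 1 ≤ ∑ j ∈ Finset.Icc (a - c - 2) (a - 1), m j) (hma : m (a - 1) = 0) :
    ∃ u, a - c - 2 ≤ u ∧ u ≤ a - 2 ∧ u % 2 = a % 2 ∧
      kfn a ω c d u + 1 ≤ sf a ω m u := by
  by_contra hcon
  push_neg at hcon
  set N := c / 2 + 1 with hN
  have key : ∀ i ∈ Finset.range N, sf a ω m (a - 2 - 2 * i) ≤ kfn a ω c d (a - 2 - 2 * i) := by
    intro i hi
    have hi' := Finset.mem_range.mp hi
    have := hcon (a - 2 - 2 * i) (by omega) (by omega) (by omega)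
    omega
  have s1 : ∀ i ∈ Finset.range N,
      sf a ω m (a - 2 - 2 * i) = m ((a - 2) - 2 * i - 1) + m ((a - 2) - 2 * i) := by
    intro i hi
    have hi' := Finset.mem_range.mp hi
    rw [sf, wt, wt, if_neg (by omega), if_neg (by omega)]
    have he : a - 2 - 2 * i - 1 = (a - 2) - 2 * i - 1 := by omega
    rw [he]
    ring
  have s2 : ∑ i ∈ Finset.range N, sf a ω m (a - 2 - 2 * i)
      = ∑ j ∈ Finset.Icc ((a - 2) + 1 - 2 * N) (a - 2), m j := by
    rw [Finset.sum_congr rfl s1, sum_pairs_left m (a - 2) N (by omega)]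
  have s3 : ∑ j ∈ Finset.Icc (a - c - 2) (a - 2), m j
      ≤ ∑ j ∈ Finset.Icc ((a - 2) + 1 - 2 * N) (a - 2), m j :=
    Finset.sum_le_sum_of_subset (Finset.Icc_subset_Icc (by omega) le_rfl)
  have hsplit : ∑ j ∈ Finset.Icc (a - c - 2) (a - 1), m j
      = ∑ j ∈ Finset.Icc (a - c - 2) (a - 2), m j + m (a - 1) := by
    have hins : Finset.Icc (a - c - 2) (a - 1) = insert (a - 1) (Finset.Icc (a - c - 2) (a - 2)) := by
      ext j
      simp only [Finset.mem_Icc, Finset.mem_insert]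
      omega
    rw [hins, Finset.sum_insert (by simp only [Finset.mem_Icc]; omega)]
    omega
  have s4 : ∑ i ∈ Finset.range N, kfn a ω c d (a - 2 - 2 * i) ≤ c := by
    have hlast : kfn a ω c d (a - 2 - 2 * (N - 1)) ≤ c - 2 * (N - 1) := by
      rcases Nat.even_or_odd c with ⟨e, he⟩ | ⟨e, he⟩
      · have hidx : a - 2 - 2 * (N - 1) = a - c - 2 := by omega
        have := kfn_acm2 (ω := ω) (d := d) ha hc
        rw [hidx]
        omega
      · have hidx : a - 2 - 2 * (N - 1) = a - c - 1 := by omega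
        have := kfn_acm1 (ω := ω) (d := d) ha hc
        rw [hidx]
        omega
    have hpeel := sum_range_le_peel (fun i => kfn a ω c d (a - 2 - 2 * i)) (N - 1)
      (c - 2 * (N - 1)) (fun i hi => kfn_le_two ha (by omega) (by omega)) hlast
    have hNe : N - 1 + 1 = N := by omega
    rw [hNe] at hpeel
    beta_reduce at hpeel
    omega
  have hsum := Finset.sum_le_sum key
  omega

lemma right_single (ha : 3 ≤ a) (m : ℕ → ℕ)
    (hq : d + 2 ≤ ∑ j ∈ Finset.Icc (a + 1) (a + d + 2), m j)
    (hout : ∀ j, a + d + 3 ≤ j → m j = 0) :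
    ∃ y, a + 2 ≤ y ∧ y ≤ a + d + 3 ∧ y % 2 = a % 2 ∧
      kfn a ω c d y + 1 ≤ sf a ω m y := by
  by_contra hcon
  push_neg at hcon
  set N := (d + 1) / 2 + 1 with hN
  have key : ∀ i ∈ Finset.range N, sf a ω m (a + 2 + 2 * i) ≤ kfn a ω c d (a + 2 + 2 * i) := by
    intro i hi
    have hi' := Finset.mem_range.mp hi
    have := hcon (a + 2 + 2 * i) (by omega) (by omega) (by omega)
    omega
  have s1 : ∀ i ∈ Finset.range N,
      sf a ω m (a + 2 + 2 * i) = m ((a + 1) + 2 * i) + m ((a + 1) + 2 * i + 1) := by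
    intro i hi
    rw [sf, wt, wt, if_neg (by omega), if_neg (by omega)]
    have he : a + 2 + 2 * i - 1 = (a + 1) + 2 * i := by omega
    have he2 : a + 2 + 2 * i = (a + 1) + 2 * i + 1 := by omega
    rw [he, he2]
    ring
  have s2 : ∑ i ∈ Finset.range N, sf a ω m (a + 2 + 2 * i)
      = ∑ j ∈ Finset.Icc (a + 1) ((a + 1) + 2 * N - 1), m j := by
    rw [Finset.sum_congr rfl s1, sum_pairs_right m (a + 1) N (by omega)]
  have s3 : ∑ j ∈ Finset.Icc (a + 1) (a + d + 2), m j
      = ∑ j ∈ Finset.Icc (a + 1) ((a + 1) + 2 * N - 1), m j := by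
    refine Finset.sum_subset (Finset.Icc_subset_Icc le_rfl (by omega)) ?_
    intro j hj hnj
    simp only [Finset.mem_Icc] at hj hnj
    exact hout j (by omega)
  have s4 : ∑ i ∈ Finset.range N, kfn a ω c d (a + 2 + 2 * i) ≤ d + 1 := by
    have hlast : kfn a ω c d (a + 2 + 2 * (N - 1)) ≤ d + 1 - 2 * (N - 1) := by
      rcases Nat.even_or_odd d with ⟨e, he⟩ | ⟨e, he⟩
      · have hidx : a + 2 + 2 * (N - 1) = a + d + 2 := by omega
        have := kfn_adp2 (ω := ω) (c := c) (d := d) ha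
        rw [hidx]
        omega
      · have hidx : a + 2 + 2 * (N - 1) = a + d + 3 := by omega
        have := kfn_adp3 (ω := ω) (c := c) (d := d) ha
        rw [hidx]
        omega
    have hpeel := sum_range_le_peel (fun i => kfn a ω c d (a + 2 + 2 * i)) (N - 1)
      (d + 1 - 2 * (N - 1)) (fun i hi => kfn_le_two ha (by omega) (by omega)) hlast
    have hNe : N - 1 + 1 = N := by omega
    rw [hNe] at hpeel
    beta_reduce at hpeel
    omega
  have hsum := Finset.sum_le_sum key
  omega

lemma right_V (ha : 3 ≤ a) (m : ℕ → ℕ)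
    (hq : d + 1 ≤ ∑ j ∈ Finset.Icc (a + 1) (a + d + 2), m j) (hma : m (a + 1) = 0)
    (hout : ∀ j, a + d + 3 ≤ j → m j = 0) :
    ∃ v, a + 3 ≤ v ∧ v ≤ a + d + 3 ∧ v % 2 ≠ a % 2 ∧
      kfn a ω c d v + 1 ≤ sf a ω m v := by
  by_contra hcon
  push_neg at hcon
  set N := d / 2 + 1 with hN
  have key : ∀ i ∈ Finset.range N, sf a ω m (a + 3 + 2 * i) ≤ kfn a ω c d (a + 3 + 2 * i) := by
    intro i hi
    have hi' := Finset.mem_range.mp hi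
    have := hcon (a + 3 + 2 * i) (by omega) (by omega) (by omega)
    omega
  have s1 : ∀ i ∈ Finset.range N,
      sf a ω m (a + 3 + 2 * i) = m ((a + 2) + 2 * i) + m ((a + 2) + 2 * i + 1) := by
    intro i hi
    rw [sf, wt, wt, if_neg (by omega), if_neg (by omega)]
    have he : a + 3 + 2 * i - 1 = (a + 2) + 2 * i := by omega
    have he2 : a + 3 + 2 * i = (a + 2) + 2 * i + 1 := by omega
    rw [he, he2]
    ring
  have s2 : ∑ i ∈ Finset.range N, sf a ω m (a + 3 + 2 * i)
      = ∑ j ∈ Finset.Icc (a + 2) ((a + 2) + 2 * N - 1), m j := by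
    rw [Finset.sum_congr rfl s1, sum_pairs_right m (a + 2) N (by omega)]
  have s3 : ∑ j ∈ Finset.Icc (a + 2) (a + d + 2), m j
      = ∑ j ∈ Finset.Icc (a + 2) ((a + 2) + 2 * N - 1), m j := by
    refine Finset.sum_subset (Finset.Icc_subset_Icc le_rfl (by omega)) ?_
    intro j hj hnj
    simp only [Finset.mem_Icc] at hj hnj
    exact hout j (by omega)
  have hsplit : ∑ j ∈ Finset.Icc (a + 1) (a + d + 2), m j
      = m (a + 1) + ∑ j ∈ Finset.Icc (a + 2) (a + d + 2), m j := by
    have hins : Finset.Icc (a + 1) (a + d + 2) = insert (a + 1) (Finset.Icc (a + 2) (a + d + 2)) := by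
      ext j
      simp only [Finset.mem_Icc, Finset.mem_insert]
      omega
    rw [hins, Finset.sum_insert (by simp only [Finset.mem_Icc]; omega)]
  have s4 : ∑ i ∈ Finset.range N, kfn a ω c d (a + 3 + 2 * i) ≤ d := by
    have hlast : kfn a ω c d (a + 3 + 2 * (N - 1)) ≤ d - 2 * (N - 1) := by
      rcases Nat.even_or_odd d with ⟨e, he⟩ | ⟨e, he⟩
      · have hidx : a + 3 + 2 * (N - 1) = a + d + 3 := by omega
        have := kfn_adp3 (ω := ω) (c := c) (d := d) ha
        rw [hidx]
        omega
      · have hidx : a + 3 + 2 * (N - 1) = a + d + 2 := by omega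
        have := kfn_adp2 (ω := ω) (c := c) (d := d) ha
        rw [hidx]
        omega
    have hpeel := sum_range_le_peel (fun i => kfn a ω c d (a + 3 + 2 * i)) (N - 1)
      (d - 2 * (N - 1)) (fun i hi => kfn_le_two ha (by omega) (by omega)) hlast
    have hNe : N - 1 + 1 = N := by omega
    rw [hNe] at hpeel
    beta_reduce at hpeel
    omega
  have hsum := Finset.sum_le_sum key
  omega


def SLs (n a c : ℕ) : Set (Fin n →₀ ℕ) := {x | ∃ i, i ≤ (c+1)/2 ∧ x = dd n (a - 2*i - 1)}
def SRs (n a d : ℕ) : Set (Fin n →₀ ℕ) := {x | ∃ i, i ≤ (d+1)/2 ∧ x = dd n (a + 2*i + 2)}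
def Ps (n a c d : ℕ) : Set (Fin n →₀ ℕ) := {x | ∃ u v : ℕ,
  (a - c - 2 ≤ u ∧ u ≤ a ∧ ∀ i, i ≤ (c + 1) / 2 → u ≠ a - 2 * i - 1) ∧
  (a + 1 ≤ v ∧ v ≤ a + d + 3 ∧ ∀ i, i ≤ (d + 1) / 2 → v ≠ a + 2 * i + 2) ∧
  x = dd n u + dd n v}

noncomputable def sv (n a ω : ℕ) (m : ℕ → ℕ) : Fin n →₀ ℕ :=
  ∑ j ∈ Icc 1 (n-1), m j • gg n a ω j

lemma kv_apply {n a ω c d : ℕ} (ha : 3 ≤ a) (hc : c ≤ a - 3) (hdn : a + d + 3 ≤ n)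
    (b : Fin n) : kv n a ω c d b = kfn a ω c d (b.1 + 1) := by
  rw [kv, Finsupp.add_apply, Finsupp.add_apply, Finsupp.add_apply, Finsupp.add_apply,
    Finsupp.smul_apply, ee_apply (by omega) (by omega),
    dd_apply (by omega : 1 ≤ a - 1) (by omega), ch_apply (a-c-1) (a-2) (by omega) (by omega),
    dd_apply (by omega : 1 ≤ a + 2) (by omega), ch_apply (a+2) (a+d+1) (by omega) (by omega),
    smul_eq_mul, kfn]

lemma sv_apply {n a ω : ℕ} (m : ℕ → ℕ) (hm : ∀ j, m j ≠ 0 → 1 ≤ j ∧ j ≤ n - 1)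
    (hn : 2 ≤ n) (b : Fin n) : sv n a ω m b = sf a ω m (b.1 + 1) := by
  have hm0 : m 0 = 0 := by by_contra h; exact absurd (hm 0 h).1 (by omega)
  have hmn : m n = 0 := by by_contra h; exact absurd (hm n h).2 (by omega)
  have hPn : b.1 + 1 ≤ n := by have := b.2; omega
  rw [sv, Finsupp.finset_sum_apply]
  have step : ∀ j ∈ Icc 1 (n-1), (m j • gg n a ω j) b
      = (if j = b.1 + 1 then m j * wt a ω j else 0)
        + (if j = b.1 + 1 - 1 then (if 2 ≤ b.1 + 1 then m j * wt a ω j else 0) else 0) := by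
    intro j hj
    have hj' := mem_Icc.mp hj
    rw [Finsupp.smul_apply, gg_apply j hj'.1 (by omega) b, smul_eq_mul, wt]
    split_ifs <;> first | omega | ring
  rw [Finset.sum_congr rfl step, Finset.sum_add_distrib,
    Finset.sum_ite_eq' (Icc 1 (n-1)) (b.1+1) (fun j => m j * wt a ω j),
    Finset.sum_ite_eq' (Icc 1 (n-1)) (b.1+1-1) (fun j => if 2 ≤ b.1+1 then m j * wt a ω j else 0),
    sf]
  simp only [Finset.mem_Icc]
  by_cases hA : b.1 + 1 ≤ n - 1
  · rw [if_pos ⟨by omega, hA⟩]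
    by_cases hP2 : 2 ≤ b.1 + 1
    · rw [if_pos (⟨by omega, by omega⟩ : 1 ≤ b.1 + 1 - 1 ∧ b.1 + 1 - 1 ≤ n - 1),
        if_pos hP2, add_comm]
    · rw [if_neg (by omega)]
      have hp0 : b.1 + 1 - 1 = 0 := by omega
      rw [hp0, hm0, zero_mul, add_zero, zero_add]
  · rw [if_neg (by omega), if_pos (⟨by omega, by omega⟩ : 1 ≤ b.1 + 1 - 1 ∧ b.1 + 1 - 1 ≤ n - 1),
      if_pos (by omega : 2 ≤ b.1 + 1), zero_add]
    have hpn : b.1 + 1 = n := by omega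
    rw [hpn, hmn, zero_mul, add_zero]

lemma edge_win {n a ω c d : ℕ} (m : ℕ → ℕ) (ha : 3 ≤ a) (hc : c ≤ a - 3)
    (hdn : a + d + 3 ≤ n) (hm : ∀ j, m j ≠ 0 → 1 ≤ j ∧ j ≤ n - 1)
    (j : ℕ) (hj1 : 1 ≤ j) (hj2 : j + 1 ≤ n)
    (h1 : kfn a ω c d j + wt a ω j ≤ sf a ω m j)
    (h2 : kfn a ω c d (j + 1) + wt a ω j ≤ sf a ω m (j + 1)) :
    gg n a ω j ≤ sv n a ω m - kv n a ω c d := by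
  intro b
  rw [Finsupp.tsub_apply, sv_apply m hm (by omega) b, kv_apply ha hc hdn b,
    gg_apply j hj1 hj2 b]
  have hwt : (if j = a then ω else 1) = wt a ω j := rfl
  rw [hwt]
  by_cases he : j = b.1 + 1
  · rw [← he, if_pos rfl, if_neg (by omega)]
    omega
  · rw [if_neg he]
    by_cases he2 : j + 1 = b.1 + 1
    · rw [← he2]
      rw [if_pos rfl]
      omega
    · rw [if_neg he2]
      simp

lemma single_win {n a ω c d : ℕ} (m : ℕ → ℕ) (ha : 3 ≤ a) (hc : c ≤ a - 3)
    (hdn : a + d + 3 ≤ n) (hm : ∀ j, m j ≠ 0 → 1 ≤ j ∧ j ≤ n - 1)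
    (x : ℕ) (hx1 : 1 ≤ x) (hx2 : x ≤ n)
    (h : kfn a ω c d x + 1 ≤ sf a ω m x) :
    dd n x ≤ sv n a ω m - kv n a ω c d := by
  intro b
  rw [Finsupp.tsub_apply, sv_apply m hm (by omega) b, kv_apply ha hc hdn b,
    dd_apply hx1 hx2 b]
  by_cases he : x = b.1 + 1
  · rw [← he, if_pos rfl]
    omega
  · rw [if_neg he]
    simp

lemma pair_win {n a ω c d : ℕ} (m : ℕ → ℕ) (ha : 3 ≤ a) (hc : c ≤ a - 3)
    (hdn : a + d + 3 ≤ n) (hm : ∀ j, m j ≠ 0 → 1 ≤ j ∧ j ≤ n - 1)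
    (u v : ℕ) (hu1 : 1 ≤ u) (huv : u < v) (hv2 : v ≤ n)
    (h1 : kfn a ω c d u + 1 ≤ sf a ω m u) (h2 : kfn a ω c d v + 1 ≤ sf a ω m v) :
    dd n u + dd n v ≤ sv n a ω m - kv n a ω c d := by
  intro b
  rw [Finsupp.add_apply, Finsupp.tsub_apply, sv_apply m hm (by omega) b,
    kv_apply ha hc hdn b, dd_apply hu1 (by omega) b, dd_apply (by omega : 1 ≤ v) hv2 b]
  by_cases he : u = b.1 + 1
  · rw [← he, if_pos rfl, if_neg (by omega)]
    omega
  · rw [if_neg he]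
    by_cases he2 : v = b.1 + 1
    · rw [← he2, if_pos rfl]
      omega
    · rw [if_neg he2]
      simp

lemma dir1 {n a ω c d t : ℕ} (hn : 6 ≤ n) (ha1 : 3 ≤ a) (ha2 : a ≤ n / 2) (hω : 2 ≤ ω)
    (ht : t = c + d + 3) (hc : c ≤ a - 3) (hd : d ≤ n - a - 3)
    (m : ℕ → ℕ) (hm : ∀ j, m j ≠ 0 → 1 ≤ j ∧ j ≤ n - 1)
    (htot : ∑ j ∈ Icc 1 (n-1), m j = t) :
    ∃ g, (g ∈ EIset n a ω ∨ g ∈ SLs n a c ∨ g ∈ SRs n a d ∨ g ∈ Ps n a c d) ∧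
      g ≤ sv n a ω m - kv n a ω c d := by
  have hdn : a + d + 3 ≤ n := by omega
  by_cases hout : ∃ j, (1 ≤ j ∧ j ≤ n - 1) ∧ (j ≤ a - c - 3 ∨ a + d + 3 ≤ j) ∧ m j ≠ 0
  · obtain ⟨j, ⟨hj1, hj2⟩, hjo, hjm⟩ := hout
    have hja : j ≠ a := by omega
    have hwt1 : wt a ω j = 1 := by rw [wt, if_neg hja]
    have hsfj : 1 ≤ sf a ω m j := by
      rw [sf, hwt1]
      omega
    have hsfj1 : 1 ≤ sf a ω m (j + 1) := by
      rw [sf]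
      simp only [Nat.add_sub_cancel]
      rw [hwt1]
      omega
    refine ⟨gg n a ω j, Or.inl ⟨j, hj1, hj2, rfl⟩, edge_win m ha1 hc hdn hm j hj1 (by omega)
      ?_ ?_⟩
    · rw [kfn_outside ha1 hc (by omega), hwt1]
      omega
    · rw [kfn_outside ha1 hc (by omega), hwt1]
      omega
  · have hvan : ∀ j, j ∉ Icc (a-c-2) (a+d+2) → m j = 0 := by
      intro j hj
      rw [Finset.mem_Icc] at hj
      by_contra hmj
      obtain ⟨h1, h2⟩ := hm j hmj
      exact hout ⟨j, ⟨h1, h2⟩, by omega, hmj⟩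
    have hwin : ∑ j ∈ Icc (a-c-2) (a+d+2), m j = t := by
      rw [← htot]
      have hss : Finset.Icc (a-c-2) (a+d+2) ⊆ Finset.Icc 1 (n-1) :=
        Finset.Icc_subset_Icc (by omega) (by omega)
      exact Finset.sum_subset hss (fun x _ hx => hvan x hx)
    set p := ∑ j ∈ Icc (a-c-2) (a-1), m j with hp_def
    set q := ∑ j ∈ Icc (a+1) (a+d+2), m j with hq_def
    have hsplit : p + m a + q = t := by
      rw [← hwin]
      have hun : Finset.Icc (a-c-2) (a+d+2)
          = Finset.Icc (a-c-2) (a-1) ∪ Finset.Icc a (a+d+2) := by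
        ext j
        simp only [Finset.mem_Icc, Finset.mem_union]
        omega
      have hdisj : Disjoint (Finset.Icc (a-c-2) (a-1)) (Finset.Icc a (a+d+2)) := by
        rw [Finset.disjoint_left]
        intro j hj hj2
        simp only [Finset.mem_Icc] at hj hj2
        omega
      rw [hun, Finset.sum_union hdisj]
      have hins : Finset.Icc a (a+d+2) = insert a (Finset.Icc (a+1) (a+d+2)) := by
        ext j
        simp only [Finset.mem_Icc, Finset.mem_insert]
        omega
      rw [hins, Finset.sum_insert (by simp only [Finset.mem_Icc]; omega)]
      omega
    have hout' : ∀ j, a + d + 3 ≤ j → m j = 0 := by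
      intro j hj
      exact hvan j (by simp only [Finset.mem_Icc]; omega)
    by_cases hma : 2 ≤ m a
    · -- edge win at a
      have h2ω : 2 * ω ≤ m a * ω := Nat.mul_le_mul_right ω hma
      refine ⟨gg n a ω a, Or.inl ⟨a, by omega, by omega, rfl⟩,
        edge_win m ha1 hc hdn hm a (by omega) (by omega) ?_ ?_⟩
      · rw [kfn_a ha1 hc, sf]
        have : wt a ω a = ω := by rw [wt, if_pos rfl]
        rw [this]
        omega
      · rw [kfn_a1 ha1, sf]
        simp only [Nat.add_sub_cancel]
        have : wt a ω a = ω := by rw [wt, if_pos rfl]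
        rw [this]
        omega
    · by_cases hpc : c + 2 ≤ p
      · obtain ⟨x, hx1, hx2, hxpar, hxwin⟩ := left_single (ω := ω) (d := d) ha1 hc m hpc
        refine ⟨dd n x, Or.inr (Or.inl ⟨(a-1-x)/2, by omega,
            by rw [show a - 2*((a-1-x)/2) - 1 = x from by omega]⟩),
          single_win m ha1 hc hdn hm x (by omega) (by omega) hxwin⟩
      · by_cases hqd : d + 2 ≤ q
        · obtain ⟨y, hy1, hy2, hypar, hywin⟩ := right_single (ω := ω) (c := c) ha1 m hqd hout'
          refine ⟨dd n y, Or.inr (Or.inr (Or.inl ⟨(y-a-2)/2, by omega,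
              by rw [show a + 2*((y-a-2)/2) + 2 = y from by omega]⟩)),
            single_win m ha1 hc hdn hm y (by omega) (by omega) hywin⟩
        · have hma1 : m a = 1 := by omega
          have hpp : p = c + 1 := by omega
          have hqq : q = d + 1 := by omega
          -- left u
          have hleft : ∃ u, a - c - 2 ≤ u ∧ u ≤ a ∧ u % 2 = a % 2 ∧
              kfn a ω c d u + 1 ≤ sf a ω m u := by
            by_cases hm1 : 1 ≤ m (a-1)
            · refine ⟨a, by omega, le_rfl, rfl, ?_⟩
              rw [kfn_a ha1 hc, sf]
              have hw1 : wt a ω (a-1) = 1 := by rw [wt, if_neg (by omega)]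
              have hw2 : wt a ω a = ω := by rw [wt, if_pos rfl]
              rw [hw1, hw2, hma1]
              omega
            · obtain ⟨u, h1, h2, h3, h4⟩ := left_U (ω := ω) (d := d) ha1 hc m (by omega)
                (by omega)
              exact ⟨u, h1, by omega, h3, h4⟩
          have hright : ∃ v, a + 1 ≤ v ∧ v ≤ a + d + 3 ∧ v % 2 ≠ a % 2 ∧
              kfn a ω c d v + 1 ≤ sf a ω m v := by
            by_cases hm1 : 1 ≤ m (a+1)
            · refine ⟨a + 1, le_rfl, by omega, by omega, ?_⟩
              rw [kfn_a1 ha1, sf]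
              simp only [Nat.add_sub_cancel]
              have hw1 : wt a ω (a+1) = 1 := by rw [wt, if_neg (by omega)]
              have hw2 : wt a ω a = ω := by rw [wt, if_pos rfl]
              rw [hw1, hw2, hma1]
              omega
            · obtain ⟨v, h1, h2, h3, h4⟩ := right_V (ω := ω) (c := c) ha1 m (by omega)
                (by omega) hout'
              exact ⟨v, by omega, h2, h3, h4⟩
          obtain ⟨u, hu1, hu2, hu3, hu4⟩ := hleft
          obtain ⟨v, hv1, hv2, hv3, hv4⟩ := hright
          refine ⟨dd n u + dd n v, Or.inr (Or.inr (Or.inr ⟨u, v,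
            ⟨hu1, hu2, fun i hi => by omega⟩, ⟨hv1, hv2, fun i hi => by omega⟩, rfl⟩)),
            pair_win m ha1 hc hdn hm u v (by omega) (by omega) (by omega) hu4 hv4⟩

-- zone lemmas (appended to dev2 body for testing)
section Zones
variable {n a ω c d : ℕ}

/-- mid budget lemmas -/
lemma mid_le (α β : ℕ) (hα : α ≤ ω) (hβ : β ≤ ω) (ha : 1 ≤ a) (han : a + 1 ≤ n) :
    α • dd n a + β • dd n (a+1) ≤ ω • ee n a := by
  intro b
  simp only [Finsupp.add_apply, Finsupp.smul_apply, smul_eq_mul]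
  rw [dd_apply (show (1:ℕ) ≤ a by omega) (show a ≤ n by omega) b,
    dd_apply (show (1:ℕ) ≤ a+1 by omega) han b,
    ee_apply (show (1:ℕ) ≤ a by omega) han b]
  split_ifs <;> simp <;> omega

lemma zl1 (ha : 3 ≤ a) (hc : c ≤ a - 3) (han : a ≤ n) (i : ℕ) (hi : 2*i ≤ c) :
    2 • dd n (a-1) + (ch n (a-c-1) (a-2*i-1-1) + pb n (a-2*i-1) i)
      ≤ (dd n (a-1) + ch n (a-c-1) (a-2)) + dd n (a-2*i-1) := by
  intro b
  simp only [Finsupp.add_apply, Finsupp.smul_apply, smul_eq_mul]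
  rw [dd_apply (show (1:ℕ) ≤ a-1 by omega) (by omega) b,
    ch_apply (a-c-1) (a-2*i-1-1) (by omega) (by omega) b,
    pb_apply (a-2*i-1) i (by omega) (by omega) b,
    ch_apply (a-c-1) (a-2) (by omega) (by omega) b,
    dd_apply (show (1:ℕ) ≤ a-2*i-1 by omega) (by omega) b]
  split_ifs <;> omega

lemma zl2 (ha : 3 ≤ a) (hc : c ≤ a - 3) (han : a ≤ n) (hodd : c % 2 = 1) :
    2 • dd n (a-1) + (ee n (a-c-2) + pb n (a-c) ((c-1)/2))
      ≤ (dd n (a-1) + ch n (a-c-1) (a-2)) + dd n (a-c-2) := by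
  intro b
  simp only [Finsupp.add_apply, Finsupp.smul_apply, smul_eq_mul]
  rw [dd_apply (show (1:ℕ) ≤ a-1 by omega) (by omega) b,
    ee_apply (show (1:ℕ) ≤ a-c-2 by omega) (by omega) b,
    pb_apply (a-c) ((c-1)/2) (by omega) (by omega) b,
    ch_apply (a-c-1) (a-2) (by omega) (by omega) b,
    dd_apply (show (1:ℕ) ≤ a-c-2 by omega) (by omega) b]
  split_ifs <;> omega

lemma zl5 (ha : 3 ≤ a) (hc : c ≤ a - 3) (han : a ≤ n) :
    ee n (a-1) + ch n (a-c-1) (a-2)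
      ≤ (dd n (a-1) + ch n (a-c-1) (a-2)) + dd n a := by
  intro b
  simp only [Finsupp.add_apply]
  rw [ee_apply (show (1:ℕ) ≤ a-1 by omega) (by omega) b,
    ch_apply (a-c-1) (a-2) (by omega) (by omega) b,
    dd_apply (show (1:ℕ) ≤ a-1 by omega) (by omega) b,
    dd_apply (show (1:ℕ) ≤ a by omega) (by omega) b]
  split_ifs <;> omega

lemma zl3 (ha : 3 ≤ a) (hc : c ≤ a - 3) (han : a ≤ n) (u : ℕ)
    (hu1 : a-c-1 ≤ u) (hu2 : u ≤ a-2) (hpar : u % 2 = a % 2) :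
    ch n (a-c-1) (u-1) + pb n u ((a-u)/2)
      ≤ (dd n (a-1) + ch n (a-c-1) (a-2)) + dd n u := by
  intro b
  simp only [Finsupp.add_apply]
  rw [ch_apply (a-c-1) (u-1) (by omega) (by omega) b,
    pb_apply u ((a-u)/2) (by omega) (by omega) b,
    dd_apply (show (1:ℕ) ≤ a-1 by omega) (by omega) b,
    ch_apply (a-c-1) (a-2) (by omega) (by omega) b,
    dd_apply (show (1:ℕ) ≤ u by omega) (by omega) b]
  split_ifs <;> omega

lemma zl4 (ha : 3 ≤ a) (hc : c ≤ a - 3) (han : a ≤ n) (heven : c % 2 = 0) :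
    ee n (a-c-2) + pb n (a-c) (c/2)
      ≤ (dd n (a-1) + ch n (a-c-1) (a-2)) + dd n (a-c-2) := by
  intro b
  simp only [Finsupp.add_apply]
  rw [ee_apply (show (1:ℕ) ≤ a-c-2 by omega) (by omega) b,
    pb_apply (a-c) (c/2) (by omega) (by omega) b,
    dd_apply (show (1:ℕ) ≤ a-1 by omega) (by omega) b,
    ch_apply (a-c-1) (a-2) (by omega) (by omega) b,
    dd_apply (show (1:ℕ) ≤ a-c-2 by omega) (by omega) b]
  split_ifs <;> omega

lemma zr1 (ha : 3 ≤ a) (hdn : a + d + 3 ≤ n) (i : ℕ) (hi : 2*i ≤ d) :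
    2 • dd n (a+2) + (pb n (a+3) i + ch n (a+2*i+2) (a+d+1))
      ≤ (dd n (a+2) + ch n (a+2) (a+d+1)) + dd n (a+2*i+2) := by
  intro b
  simp only [Finsupp.add_apply, Finsupp.smul_apply, smul_eq_mul]
  rw [dd_apply (show (1:ℕ) ≤ a+2 by omega) (by omega) b,
    pb_apply (a+3) i (by omega) (by omega) b,
    ch_apply (a+2*i+2) (a+d+1) (by omega) (by omega) b,
    ch_apply (a+2) (a+d+1) (by omega) (by omega) b,
    dd_apply (show (1:ℕ) ≤ a+2*i+2 by omega) (by omega) b]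
  split_ifs <;> omega

lemma zr2 (ha : 3 ≤ a) (hdn : a + d + 3 ≤ n) (hodd : d % 2 = 1) :
    2 • dd n (a+2) + (pb n (a+3) ((d-1)/2) + ee n (a+d+2))
      ≤ (dd n (a+2) + ch n (a+2) (a+d+1)) + dd n (a+d+3) := by
  intro b
  simp only [Finsupp.add_apply, Finsupp.smul_apply, smul_eq_mul]
  rw [dd_apply (show (1:ℕ) ≤ a+2 by omega) (by omega) b,
    pb_apply (a+3) ((d-1)/2) (by omega) (by omega) b,
    ee_apply (show (1:ℕ) ≤ a+d+2 by omega) (by omega) b,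
    ch_apply (a+2) (a+d+1) (by omega) (by omega) b,
    dd_apply (show (1:ℕ) ≤ a+d+3 by omega) (by omega) b]
  split_ifs <;> omega

lemma zr5 (ha : 3 ≤ a) (hdn : a + d + 3 ≤ n) :
    ee n (a+1) + ch n (a+2) (a+d+1)
      ≤ (dd n (a+2) + ch n (a+2) (a+d+1)) + dd n (a+1) := by
  intro b
  simp only [Finsupp.add_apply]
  rw [ee_apply (show (1:ℕ) ≤ a+1 by omega) (by omega) b,
    ch_apply (a+2) (a+d+1) (by omega) (by omega) b,
    dd_apply (show (1:ℕ) ≤ a+2 by omega) (by omega) b,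
    dd_apply (show (1:ℕ) ≤ a+1 by omega) (by omega) b]
  split_ifs <;> omega

lemma zr3 (ha : 3 ≤ a) (hdn : a + d + 3 ≤ n) (v : ℕ)
    (hv1 : a+3 ≤ v) (hv2 : v ≤ a+d+2) (hpar : v % 2 ≠ a % 2) :
    2 • ee n (v-1) + ch n v (a+d+1) + pb n (a+2) ((v-a-1)/2 - 1)
      ≤ (dd n (a+2) + ch n (a+2) (a+d+1)) + dd n v := by
  intro b
  simp only [Finsupp.add_apply, Finsupp.smul_apply, smul_eq_mul]
  rw [ee_apply (show (1:ℕ) ≤ v-1 by omega) (by omega) b,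
    ch_apply v (a+d+1) (by omega) (by omega) b,
    pb_apply (a+2) ((v-a-1)/2 - 1) (by omega) (by omega) b,
    dd_apply (show (1:ℕ) ≤ a+2 by omega) (by omega) b,
    ch_apply (a+2) (a+d+1) (by omega) (by omega) b,
    dd_apply (show (1:ℕ) ≤ v by omega) (by omega) b]
  split_ifs <;> omega

lemma zr4 (ha : 3 ≤ a) (hdn : a + d + 3 ≤ n) (heven : d % 2 = 0) :
    ee n (a+d+2) + pb n (a+2) (d/2)
      ≤ (dd n (a+2) + ch n (a+2) (a+d+1)) + dd n (a+d+3) := by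
  intro b
  simp only [Finsupp.add_apply]
  rw [ee_apply (show (1:ℕ) ≤ a+d+2 by omega) (by omega) b,
    pb_apply (a+2) (d/2) (by omega) (by omega) b,
    dd_apply (show (1:ℕ) ≤ a+2 by omega) (by omega) b,
    ch_apply (a+2) (a+d+1) (by omega) (by omega) b,
    dd_apply (show (1:ℕ) ≤ a+d+3 by omega) (by omega) b]
  split_ifs <;> omega

end Zones

section Dir2
variable {n a ω c d : ℕ}

lemma mem_sumSet_one {σ : Type*} {A : Set (σ →₀ ℕ)} {x : σ →₀ ℕ} (h : x ∈ A) :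
    x ∈ sumSet A 1 := ⟨x, h, 0, by simp [sumSet], by simp⟩

lemma mem_sumSet_congr {σ : Type*} {A : Set (σ →₀ ℕ)} {x : σ →₀ ℕ} {s t : ℕ}
    (h : x ∈ sumSet A s) (he : s = t) : x ∈ sumSet A t := he ▸ h

lemma sum_mem_sumSet {σ : Type*} {A : Set (σ →₀ ℕ)} {S : Finset ℕ} {F : ℕ → σ →₀ ℕ}
    (h : ∀ j ∈ S, F j ∈ A) : (∑ j ∈ S, F j) ∈ sumSet A S.card := by
  have h2 := sum_smul_mem_sumSet (cm := fun _ => 1) (F := F) (S := S) h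
  simp only [one_smul] at h2
  rwa [← Finset.card_eq_sum_ones] at h2

lemma ee_mem (j : ℕ) (h1 : 1 ≤ j) (h2 : j ≤ n - 1) (hja : j ≠ a) :
    ee n j ∈ EIset n a ω :=
  ⟨j, h1, h2, by rw [gg, if_neg hja, one_smul]⟩

lemma ee_mem1 (j : ℕ) (h1 : 1 ≤ j) (h2 : j ≤ n - 1) (hja : j ≠ a) :
    ee n j ∈ sumSet (EIset n a ω) 1 := mem_sumSet_one (ee_mem j h1 h2 hja)

lemma two_ee_mem (j : ℕ) (h1 : 1 ≤ j) (h2 : j ≤ n - 1) (hja : j ≠ a) :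
    (2:ℕ) • ee n j ∈ sumSet (EIset n a ω) 2 := by
  rw [two_smul]
  exact mem_sumSet_add (ee_mem1 j h1 h2 hja) (ee_mem1 j h1 h2 hja)

lemma gga_mem1 (h1 : 1 ≤ a) (h2 : a ≤ n - 1) :
    ω • ee n a ∈ sumSet (EIset n a ω) 1 :=
  mem_sumSet_one ⟨a, h1, h2, by rw [gg, if_pos rfl]⟩

lemma ch_mem (l r : ℕ) (h1 : 1 ≤ l) (h2 : r ≤ n - 1) (hav : a < l ∨ r < a) :
    ch n l r ∈ sumSet (EIset n a ω) (r + 1 - l) := by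
  have h := sum_mem_sumSet (A := EIset n a ω) (S := Icc l r) (F := ee n)
    (fun j hj => by
      have := mem_Icc.mp hj
      exact ee_mem j (by omega) (by omega) (by omega))
  rw [Nat.card_Icc] at h
  exact h

lemma pb_mem (x N : ℕ) (hx : 1 ≤ x) (h2 : x + 2*N ≤ n) (hav : ∀ i, i < N → x + 2*i ≠ a) :
    pb n x N ∈ sumSet (EIset n a ω) (2*N) := by
  have h := sum_smul_mem_sumSet (A := EIset n a ω) (S := Finset.range N) (cm := fun _ => 2)
    (F := fun i => ee n (x + 2*i)) (fun i hi => by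
      have := Finset.mem_range.mp hi
      exact ee_mem _ (by omega) (by omega) (hav i (by omega)))
  refine mem_sumSet_congr h ?_
  rw [Finset.sum_const, Finset.card_range, smul_eq_mul]
  omega

lemma dir2 {t : ℕ} (hn : 6 ≤ n) (ha1 : 3 ≤ a) (ha2 : a ≤ n / 2) (hω : 2 ≤ ω)
    (ht : t = c + d + 3) (hc : c ≤ a - 3) (hd : d ≤ n - a - 3) (g : Fin n →₀ ℕ)
    (hg : g ∈ EIset n a ω ∨ g ∈ SLs n a c ∨ g ∈ SRs n a d ∨ g ∈ Ps n a c d) :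
    ∃ s ∈ sumSet (EIset n a ω) t, s ≤ kv n a ω c d + g := by
  have hdn : a + d + 3 ≤ n := by omega
  have han : a ≤ n := by omega
  have hmid : dd n a + dd n (a+1) ≤ ω • ee n a := by
    have h := mid_le (n := n) (a := a) (ω := ω) 1 1 (by omega) (by omega) (by omega) (by omega)
    simpa [one_smul] using h
  have hmid2 : 2 • dd n a + dd n (a+1) ≤ ω • ee n a := by
    have h := mid_le (n := n) (a := a) (ω := ω) 2 1 (by omega) (by omega) (by omega) (by omega)
    simpa [one_smul] using h
  have hmid3 : dd n a + 2 • dd n (a+1) ≤ ω • ee n a := by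
    have h := mid_le (n := n) (a := a) (ω := ω) 1 2 (by omega) (by omega) (by omega) (by omega)
    simpa [one_smul] using h
  rcases hg with ⟨j, hj1, hj2, rfl⟩ | ⟨i, hi, rfl⟩ | ⟨i, hi, rfl⟩ | ⟨u, v, hu, hv, rfl⟩
  · -- edge generator
    refine ⟨gg n a ω j + (ee n (a-1) + ee n (a+1) + (ch n (a-c-1) (a-2) + ch n (a+2) (a+d+1))),
      ?_, ?_⟩
    · refine mem_sumSet_congr (mem_sumSet_add (mem_sumSet_one ⟨j, hj1, hj2, rfl⟩)
        (mem_sumSet_add (mem_sumSet_add (ee_mem1 (a-1) (by omega) (by omega) (by omega))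
          (ee_mem1 (a+1) (by omega) (by omega) (by omega)))
        (mem_sumSet_add (ch_mem (a-c-1) (a-2) (by omega) (by omega) (by omega))
          (ch_mem (a+2) (a+d+1) (by omega) (by omega) (by omega))))) ?_
      omega
    · have key : ee n (a-1) + ee n (a+1) + (ch n (a-c-1) (a-2) + ch n (a+2) (a+d+1))
          = (dd n a + dd n (a+1)) + ((dd n (a-1) + ch n (a-c-1) (a-2))
            + (dd n (a+2) + ch n (a+2) (a+d+1))) := by
        simp only [ee]
        rw [show a-1+1 = a from by omega, show a+1+1 = a+2 from by omega]
        abel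
      rw [key, show kv n a ω c d + gg n a ω j = gg n a ω j + (ω • ee n a
        + ((dd n (a-1) + ch n (a-c-1) (a-2)) + (dd n (a+2) + ch n (a+2) (a+d+1))))
        from by rw [kv]; abel]
      exact add_le_add_right (add_le_add hmid le_rfl) _
  · -- left single x = a - 2i - 1
    by_cases hic : 2*i ≤ c
    · refine ⟨(2 • ee n (a-1) + ee n (a+1)) + ((ch n (a-c-1) (a-2*i-1-1) + pb n (a-2*i-1) i)
        + ch n (a+2) (a+d+1)), ?_, ?_⟩
      · refine mem_sumSet_congr (mem_sumSet_add
          (mem_sumSet_add (two_ee_mem (a-1) (by omega) (by omega) (by omega))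
            (ee_mem1 (a+1) (by omega) (by omega) (by omega)))
          (mem_sumSet_add (mem_sumSet_add
            (ch_mem (a-c-1) (a-2*i-1-1) (by omega) (by omega) (by omega))
            (pb_mem (a-2*i-1) i (by omega) (by omega) (fun j hj => by omega)))
          (ch_mem (a+2) (a+d+1) (by omega) (by omega) (by omega)))) ?_
        omega
      · have key : (2 • ee n (a-1) + ee n (a+1)) + ((ch n (a-c-1) (a-2*i-1-1)
            + pb n (a-2*i-1) i) + ch n (a+2) (a+d+1))
            = (2 • dd n a + dd n (a+1))
              + ((2 • dd n (a-1) + (ch n (a-c-1) (a-2*i-1-1) + pb n (a-2*i-1) i))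
              + (dd n (a+2) + ch n (a+2) (a+d+1))) := by
          simp only [ee, smul_add]
          rw [show a-1+1 = a from by omega, show a+1+1 = a+2 from by omega]
          abel
        rw [key, show kv n a ω c d + dd n (a-2*i-1) = ω • ee n a
          + (((dd n (a-1) + ch n (a-c-1) (a-2)) + dd n (a-2*i-1))
            + (dd n (a+2) + ch n (a+2) (a+d+1))) from by rw [kv]; abel]
        exact add_le_add hmid2 (add_le_add (zl1 ha1 hc han i hic) le_rfl)
    · have hix : 2*i = c + 1 := by omega
      have hxx : a - 2*i - 1 = a - c - 2 := by omega
      rw [hxx]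
      refine ⟨(2 • ee n (a-1) + ee n (a+1)) + ((ee n (a-c-2) + pb n (a-c) ((c-1)/2))
        + ch n (a+2) (a+d+1)), ?_, ?_⟩
      · refine mem_sumSet_congr (mem_sumSet_add
          (mem_sumSet_add (two_ee_mem (a-1) (by omega) (by omega) (by omega))
            (ee_mem1 (a+1) (by omega) (by omega) (by omega)))
          (mem_sumSet_add (mem_sumSet_add
            (ee_mem1 (a-c-2) (by omega) (by omega) (by omega))
            (pb_mem (a-c) ((c-1)/2) (by omega) (by omega) (fun j hj => by omega)))
          (ch_mem (a+2) (a+d+1) (by omega) (by omega) (by omega)))) ?_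
        omega
      · have key : (2 • ee n (a-1) + ee n (a+1)) + ((ee n (a-c-2) + pb n (a-c) ((c-1)/2))
            + ch n (a+2) (a+d+1))
            = (2 • dd n a + dd n (a+1))
              + ((2 • dd n (a-1) + (ee n (a-c-2) + pb n (a-c) ((c-1)/2)))
              + (dd n (a+2) + ch n (a+2) (a+d+1))) := by
          simp only [ee, smul_add]
          rw [show a-1+1 = a from by omega, show a+1+1 = a+2 from by omega]
          abel
        rw [key, show kv n a ω c d + dd n (a-c-2) = ω • ee n a
          + (((dd n (a-1) + ch n (a-c-1) (a-2)) + dd n (a-c-2))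
            + (dd n (a+2) + ch n (a+2) (a+d+1))) from by rw [kv]; abel]
        exact add_le_add hmid2 (add_le_add (zl2 ha1 hc han (by omega)) le_rfl)
  · -- right single y = a + 2i + 2
    by_cases hid : 2*i ≤ d
    · refine ⟨(ee n (a-1) + 2 • ee n (a+1)) + (ch n (a-c-1) (a-2)
        + (pb n (a+3) i + ch n (a+2*i+2) (a+d+1))), ?_, ?_⟩
      · refine mem_sumSet_congr (mem_sumSet_add
          (mem_sumSet_add (ee_mem1 (a-1) (by omega) (by omega) (by omega))
            (two_ee_mem (a+1) (by omega) (by omega) (by omega)))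
          (mem_sumSet_add (ch_mem (a-c-1) (a-2) (by omega) (by omega) (by omega))
          (mem_sumSet_add (pb_mem (a+3) i (by omega) (by omega) (fun j hj => by omega))
            (ch_mem (a+2*i+2) (a+d+1) (by omega) (by omega) (by omega))))) ?_
        omega
      · have key : (ee n (a-1) + 2 • ee n (a+1)) + (ch n (a-c-1) (a-2)
            + (pb n (a+3) i + ch n (a+2*i+2) (a+d+1)))
            = (dd n a + 2 • dd n (a+1))
              + ((dd n (a-1) + ch n (a-c-1) (a-2))
              + (2 • dd n (a+2) + (pb n (a+3) i + ch n (a+2*i+2) (a+d+1)))) := by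
          simp only [ee, smul_add]
          rw [show a-1+1 = a from by omega, show a+1+1 = a+2 from by omega]
          abel
        rw [key, show kv n a ω c d + dd n (a+2*i+2) = ω • ee n a
          + ((dd n (a-1) + ch n (a-c-1) (a-2))
            + ((dd n (a+2) + ch n (a+2) (a+d+1)) + dd n (a+2*i+2))) from by rw [kv]; abel]
        exact add_le_add hmid3 (add_le_add le_rfl (zr1 ha1 hdn i hid))
    · have hix : 2*i = d + 1 := by omega
      have hyy : a + 2*i + 2 = a + d + 3 := by omega
      rw [hyy]
      refine ⟨(ee n (a-1) + 2 • ee n (a+1)) + (ch n (a-c-1) (a-2)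
        + (pb n (a+3) ((d-1)/2) + ee n (a+d+2))), ?_, ?_⟩
      · refine mem_sumSet_congr (mem_sumSet_add
          (mem_sumSet_add (ee_mem1 (a-1) (by omega) (by omega) (by omega))
            (two_ee_mem (a+1) (by omega) (by omega) (by omega)))
          (mem_sumSet_add (ch_mem (a-c-1) (a-2) (by omega) (by omega) (by omega))
          (mem_sumSet_add (pb_mem (a+3) ((d-1)/2) (by omega) (by omega) (fun j hj => by omega))
            (ee_mem1 (a+d+2) (by omega) (by omega) (by omega))))) ?_
        omega
      · have key : (ee n (a-1) + 2 • ee n (a+1)) + (ch n (a-c-1) (a-2)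
            + (pb n (a+3) ((d-1)/2) + ee n (a+d+2)))
            = (dd n a + 2 • dd n (a+1))
              + ((dd n (a-1) + ch n (a-c-1) (a-2))
              + (2 • dd n (a+2) + (pb n (a+3) ((d-1)/2) + ee n (a+d+2)))) := by
          simp only [ee, smul_add]
          rw [show a-1+1 = a from by omega, show a+1+1 = a+2 from by omega]
          abel
        rw [key, show kv n a ω c d + dd n (a+d+3) = ω • ee n a
          + ((dd n (a-1) + ch n (a-c-1) (a-2))
            + ((dd n (a+2) + ch n (a+2) (a+d+1)) + dd n (a+d+3))) from by rw [kv]; abel]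
        exact add_le_add hmid3 (add_le_add le_rfl (zr2 ha1 hdn (by omega)))
  · -- pair generator
    obtain ⟨hu1, hu2, hu3⟩ := hu
    obtain ⟨hv1, hv2, hv3⟩ := hv
    have hupar : u % 2 = a % 2 := by
      by_contra hpar
      exact (hu3 ((a - u - 1)/2) (by omega)) (by omega)
    have hvpar : v % 2 ≠ a % 2 := by
      intro hpar
      exact (hv3 ((v - a - 2)/2) (by omega)) (by omega)
    -- left component
    have hL : ∃ L, L ∈ sumSet (EIset n a ω) (c+1)
        ∧ L ≤ (dd n (a-1) + ch n (a-c-1) (a-2)) + dd n u := by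
      by_cases hua : u = a
      · rw [hua]
        exact ⟨ee n (a-1) + ch n (a-c-1) (a-2),
          mem_sumSet_congr (mem_sumSet_add (ee_mem1 (a-1) (by omega) (by omega) (by omega))
            (ch_mem (a-c-1) (a-2) (by omega) (by omega) (by omega))) (by omega),
          zl5 ha1 hc han⟩
      · by_cases huc : a - c - 1 ≤ u
        · refine ⟨ch n (a-c-1) (u-1) + pb n u ((a-u)/2),
            mem_sumSet_congr (mem_sumSet_add
              (ch_mem (a-c-1) (u-1) (by omega) (by omega) (by omega))
              (pb_mem u ((a-u)/2) (by omega) (by omega) (fun j hj => by omega)))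
              (by omega),
            zl3 ha1 hc han u huc (by omega) hupar⟩
        · have huu : u = a - c - 2 := by omega
          rw [huu]
          refine ⟨ee n (a-c-2) + pb n (a-c) (c/2),
            mem_sumSet_congr (mem_sumSet_add
              (ee_mem1 (a-c-2) (by omega) (by omega) (by omega))
              (pb_mem (a-c) (c/2) (by omega) (by omega) (fun j hj => by omega)))
              (by omega),
            zl4 ha1 hc han (by omega)⟩
    -- right component
    have hR : ∃ R, R ∈ sumSet (EIset n a ω) (d+1)
        ∧ R ≤ (dd n (a+2) + ch n (a+2) (a+d+1)) + dd n v := by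
      by_cases hva : v = a + 1
      · rw [hva]
        exact ⟨ee n (a+1) + ch n (a+2) (a+d+1),
          mem_sumSet_congr (mem_sumSet_add (ee_mem1 (a+1) (by omega) (by omega) (by omega))
            (ch_mem (a+2) (a+d+1) (by omega) (by omega) (by omega))) (by omega),
          zr5 ha1 hdn⟩
      · by_cases hvc : v ≤ a + d + 2
        · refine ⟨2 • ee n (v-1) + ch n v (a+d+1) + pb n (a+2) ((v-a-1)/2 - 1),
            mem_sumSet_congr (mem_sumSet_add (mem_sumSet_add
              (two_ee_mem (v-1) (by omega) (by omega) (by omega))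
              (ch_mem v (a+d+1) (by omega) (by omega) (by omega)))
              (pb_mem (a+2) ((v-a-1)/2 - 1) (by omega) (by omega) (fun j hj => by omega)))
              (by omega),
            zr3 ha1 hdn v (by omega) hvc hvpar⟩
        · have hvv : v = a + d + 3 := by omega
          rw [hvv]
          refine ⟨ee n (a+d+2) + pb n (a+2) (d/2),
            mem_sumSet_congr (mem_sumSet_add
              (ee_mem1 (a+d+2) (by omega) (by omega) (by omega))
              (pb_mem (a+2) (d/2) (by omega) (by omega) (fun j hj => by omega)))
              (by omega),
            zr4 ha1 hdn (by omega)⟩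
    obtain ⟨L, hLmem, hLle⟩ := hL
    obtain ⟨R, hRmem, hRle⟩ := hR
    refine ⟨ω • ee n a + (L + R),
      mem_sumSet_congr (mem_sumSet_add (gga_mem1 (by omega) (by omega))
        (mem_sumSet_add hLmem hRmem)) (by omega), ?_⟩
    rw [show kv n a ω c d + (dd n u + dd n v) = ω • ee n a
      + (((dd n (a-1) + ch n (a-c-1) (a-2)) + dd n u)
        + ((dd n (a+2) + ch n (a+2) (a+d+1)) + dd n v)) from by rw [kv]; abel]
    exact add_le_add_right (add_le_add hLle hRle) _

end Dir2

section Final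
variable {n a ω c d : ℕ} {K : Type*} [Field K]

lemma SL_span_eq (ha : 3 ≤ a) (hc : c ≤ a - 3) (han : a ≤ n) :
    {p : MvPolynomial (Fin n) K | ∃ i, i ≤ (c+1)/2 ∧ p = Xv n K (a - 2*i - 1)}
      = (fun s => monomial s (1:K)) '' SLs n a c := by
  ext p
  constructor
  · rintro ⟨i, hi, rfl⟩
    exact ⟨dd n (a-2*i-1), ⟨i, hi, rfl⟩, (Xv_eq (by omega) (by omega)).symm⟩
  · rintro ⟨x, ⟨i, hi, rfl⟩, rfl⟩
    exact ⟨i, hi, (Xv_eq (by omega) (by omega)).symm⟩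

lemma SR_span_eq (ha : 3 ≤ a) (hdn : a + d + 3 ≤ n) :
    {p : MvPolynomial (Fin n) K | ∃ i, i ≤ (d+1)/2 ∧ p = Xv n K (a + 2*i + 2)}
      = (fun s => monomial s (1:K)) '' SRs n a d := by
  ext p
  constructor
  · rintro ⟨i, hi, rfl⟩
    exact ⟨dd n (a+2*i+2), ⟨i, hi, rfl⟩, (Xv_eq (by omega) (by omega)).symm⟩
  · rintro ⟨x, ⟨i, hi, rfl⟩, rfl⟩
    exact ⟨i, hi, (Xv_eq (by omega) (by omega)).symm⟩

lemma Ps_span_eq (ha : 3 ≤ a) (hc : c ≤ a - 3) (hdn : a + d + 3 ≤ n) :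
    {p : MvPolynomial (Fin n) K | ∃ u v : ℕ,
        (a - c - 2 ≤ u ∧ u ≤ a ∧ ∀ i, i ≤ (c + 1) / 2 → u ≠ a - 2 * i - 1) ∧
        (a + 1 ≤ v ∧ v ≤ a + d + 3 ∧ ∀ i, i ≤ (d + 1) / 2 → v ≠ a + 2 * i + 2) ∧
        p = Xv n K u * Xv n K v}
      = (fun s => monomial s (1:K)) '' Ps n a c d := by
  have hXX : ∀ u v : ℕ, 1 ≤ u → u ≤ n → 1 ≤ v → v ≤ n →
      Xv n K u * Xv n K v = monomial (dd n u + dd n v) 1 := by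
    intro u v h1 h2 h3 h4
    rw [Xv_eq h1 h2, Xv_eq h3 h4, monomial_mul, one_mul]
  ext p
  constructor
  · rintro ⟨u, v, hu, hv, rfl⟩
    exact ⟨dd n u + dd n v, ⟨u, v, hu, hv, rfl⟩,
      (hXX u v (by omega) (by omega) (by omega) (by omega)).symm⟩
  · rintro ⟨x, ⟨u, v, hu, hv, rfl⟩, rfl⟩
    exact ⟨u, v, hu, hv, (hXX u v (by omega) (by omega) (by omega) (by omega)).symm⟩

end Final

end StmtEleven

/-- With `n ≥ 6`, `3 ≤ a ≤ ⌊n/2⌋`, `ω > 1`, `3 ≤ t ≤ n - 3`,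
`t - 3 = c + d` with `0 ≤ c ≤ a - 3`, `0 ≤ d ≤ n - a - 3`, and
`h = u_a^ω x_{a-1} x_{a+2} (∏_{i=a-c-1}^{a-2} u_i)(∏_{i=a+2}^{a+d+1} u_i)`, one has
`I^t : h = I + (x_{a-2i-1} : 0 ≤ i ≤ ⌈c/2⌉) + (x_{a+2i+2} : 0 ≤ i ≤ ⌈d/2⌉) + I(K_{U,V})`,
where `U = {x_{a-c-2},…,x_a} \ {x_{a-2i-1}}` and `V = {x_{a+1},…,x_{a+d+3}} \ {x_{a+2i+2}}`. -/
theorem colon_h_one_weight (n : ℕ) (K : Type*) [Field K] (a ω t c d : ℕ)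
    (hn : 6 ≤ n) (ha1 : 3 ≤ a) (ha2 : a ≤ n / 2) (hω : 1 < ω)
    (ht1 : 3 ≤ t) (ht2 : t ≤ n - 3)
    (hcd : t - 3 = c + d) (hc : c ≤ a - 3) (hd : d ≤ n - a - 3) :
    (pathIdeal1 n K a ω ^ t).colon
        (Ideal.span {pu n K a ^ ω * Xv n K (a - 1) * Xv n K (a + 2) *
          (∏ i ∈ Icc (a - c - 1) (a - 2), pu n K i) *
          (∏ i ∈ Icc (a + 2) (a + d + 1), pu n K i)}) =
      pathIdeal1 n K a ω ⊔
        Ideal.span {p | ∃ i, i ≤ (c + 1) / 2 ∧ p = Xv n K (a - 2 * i - 1)} ⊔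
        Ideal.span {p | ∃ i, i ≤ (d + 1) / 2 ∧ p = Xv n K (a + 2 * i + 2)} ⊔
        Ideal.span {p | ∃ u v : ℕ,
          (a - c - 2 ≤ u ∧ u ≤ a ∧ ∀ i, i ≤ (c + 1) / 2 → u ≠ a - 2 * i - 1) ∧
          (a + 1 ≤ v ∧ v ≤ a + d + 3 ∧ ∀ i, i ≤ (d + 1) / 2 → v ≠ a + 2 * i + 2) ∧
          p = Xv n K u * Xv n K v} := by
  classical
  have hω2 : 2 ≤ ω := hω
  have ht : t = c + d + 3 := by omega
  have hdn : a + d + 3 ≤ n := by omega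
  rw [StmtEleven.pathIdeal1_eq (by omega : 2 ≤ n), StmtEleven.span_monomial_pow,
    StmtEleven.h_eq ha1 hc hdn, StmtEleven.colon_span_monomial,
    StmtEleven.SL_span_eq ha1 hc (by omega), StmtEleven.SR_span_eq ha1 hdn,
    StmtEleven.Ps_span_eq ha1 hc hdn,
    ← Ideal.span_union, ← Ideal.span_union, ← Ideal.span_union,
    ← Set.image_union, ← Set.image_union, ← Set.image_union]
  apply StmtEleven.span_monomial_eq
  · rintro r ⟨s, hs, rfl⟩
    obtain ⟨m, hm, htot, hsum⟩ := StmtEleven.sumSet_decompose rfl hs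
    obtain ⟨g, hgmem, hgle⟩ := StmtEleven.dir1 hn ha1 ha2 hω2 ht hc hd m hm htot
    refine ⟨g, ?_, ?_⟩
    · simp only [Set.mem_union]
      tauto
    · rw [hsum]
      exact hgle
  · intro g hg
    have hg' : g ∈ StmtEleven.EIset n a ω ∨ g ∈ StmtEleven.SLs n a c ∨
        g ∈ StmtEleven.SRs n a d ∨ g ∈ StmtEleven.Ps n a c d := by
      simp only [Set.mem_union] at hg
      tauto
    obtain ⟨s, hsmem, hsle⟩ := StmtEleven.dir2 hn ha1 ha2 hω2 ht hc hd g hg'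
    exact ⟨s - StmtEleven.kv n a ω c d, ⟨s, hsmem, rfl⟩,
      tsub_le_iff_right.mpr (hsle.trans (le_of_eq (add_comm _ _)))⟩
end

section
/- Let 3 ≤ a ≤ ⌊n/2⌋ - 1, γ, δ > 1, and I = (u_1,...,u_{a-1}, u_a^γ, u_{a+1}, u_{a+2}^δ, u_{a+3},...,u_{n-1}) with u_j = x_j x_{j+1}. Then I^2 : (u_2 u_{a+2}) = (x_{a+1}, (x_{a+2} x_{a+3})^{δ-1}, x_{a+4}) + (x_{2p+1} x_{2q} : 0 ≤ p ≤ 1, 1 ≤ q ≤ 2) + I. -/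
open MvPolynomial Finset

/-- The edge ideal `I = (u_1,…,u_{a-1}, u_a^γ, u_{a+1}, u_{a+2}^δ, u_{a+3},…,u_{n-1})` of
the edge-weighted path with two non-trivial weights `γ, δ` at positions `a` and `a+2`. -/
noncomputable def pathIdeal2 (n : ℕ) (K : Type*) [Field K] (a γ δ : ℕ) :
    Ideal (MvPolynomial (Fin n) K) :=
  Ideal.span {p | ∃ j, 1 ≤ j ∧ j ≤ n - 1 ∧
    p = pu n K j ^ (if j = a then γ else if j = a + 2 then δ else 1)}

open Pointwise

/-! ### ℕ-level combinatorics -/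

def sN (i t : ℕ) : ℕ := if t + 1 = i then 1 else 0

def wN (a γ δ k : ℕ) : ℕ := if k = a then γ else if k = a + 2 then δ else 1

def eN (a γ δ k t : ℕ) : ℕ := wN a γ δ k * (sN k t + sN (k+1) t)

def dN (a t : ℕ) : ℕ := sN 2 t + sN 3 t + sN (a+2) t + sN (a+3) t

lemma sN_eq (i t : ℕ) : sN i t = 1 - (t + 1 - i) - (i - (t+1)) := by
  unfold sN; split_ifs <;> omega

lemma wN_one {a γ δ k : ℕ} (h1 : k ≠ a) (h2 : k ≠ a+2) : wN a γ δ k = 1 := by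
  unfold wN; rw [if_neg h1, if_neg h2]

lemma wN_a {a γ δ : ℕ} : wN a γ δ a = γ := by
  unfold wN; rw [if_pos rfl]

lemma wN_a2 {a γ δ : ℕ} : wN a γ δ (a+2) = δ := by
  unfold wN; rw [if_neg (by omega), if_pos rfl]

lemma dzero (a k t : ℕ) (h3 : 3 ≤ a) (h1 : k ≠ 1) (h2 : k ≠ 2) (h5 : k = 3 → a = 3)
    (hne : ¬(k = a ∧ a = 3)) (h6 : k ≠ a+1) (h7 : k ≠ a+2) (h8 : k ≠ a+3)
    (hz : ¬(sN k t + sN (k+1) t = 0)) : dN a t = 0 := by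
  simp only [dN, sN_eq] at *
  omega

/-- single-index analysis -/
lemma combA (n a γ δ : ℕ) (ha1 : 3 ≤ a) (hn : 2*a+2 ≤ n) (hγ : 1 < γ) (hδ : 1 < δ)
    (μ : ℕ → ℕ) (k : ℕ) (hk1 : 1 ≤ k) (hk2 : k ≤ n-1)
    (hk3 : k ≠ 1 ∧ k ≠ 2 ∧ (k = 3 → a = 3))
    (H : ∀ t, t < n → eN a γ δ k t ≤ μ t + dN a t) :
    (1 ≤ μ a) ∨ (δ-1 ≤ μ (a+1) ∧ δ-1 ≤ μ (a+2)) ∨ 1 ≤ μ (a+3)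
    ∨ (1 ≤ μ 0 ∧ 1 ≤ μ 1) ∨ (1 ≤ μ 0 ∧ 1 ≤ μ 3) ∨ (1 ≤ μ 2 ∧ 1 ≤ μ 1) ∨ (1 ≤ μ 2 ∧ 1 ≤ μ 3)
    ∨ ∃ m, 1 ≤ m ∧ m ≤ n-1 ∧ ∀ t, t < n → eN a γ δ m t ≤ μ t := by
  obtain ⟨hk3, hk4, hk5⟩ := hk3
  by_cases hka1 : k = a + 1
  · subst hka1
    refine Or.inl ?_
    have h := H a (by omega)
    simp only [eN, wN, if_neg (by omega : ¬ a+1 = a), if_neg (by omega : ¬ a+1 = a+2),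
      one_mul, dN, sN] at h
    split_ifs at h <;> omega
  · by_cases hka2 : k = a + 2
    · subst hka2
      refine Or.inr (Or.inl ?_)
      have h1 := H (a+1) (by omega)
      have h2 := H (a+2) (by omega)
      simp only [eN, wN, if_neg (by omega : ¬ a+2 = a), if_pos rfl, dN, sN] at h1 h2
      split_ifs at h1 h2 <;> omega
    · by_cases hka3 : k = a + 3
      · subst hka3
        refine Or.inr (Or.inr (Or.inl ?_))
        have h := H (a+3) (by omega)
        simp only [eN, wN, if_neg (by omega : ¬ a+3 = a), if_neg (by omega : ¬ a+3 = a+2),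
          one_mul, dN, sN] at h
        split_ifs at h <;> omega
      · by_cases hka : k = a ∧ a = 3
        · obtain ⟨hka, ha3⟩ := hka
          subst ha3; subst hka
          refine Or.inr <| Or.inr <| Or.inr <| Or.inr <| Or.inr <| Or.inr <| Or.inl ?_
          have h2 := H 2 (by omega)
          have h3 := H 3 (by omega)
          simp only [eN, wN, dN, sN] at h2 h3
          norm_num at h2 h3
          omega
        · -- support of e_k disjoint from support of d
          refine Or.inr <| Or.inr <| Or.inr <| Or.inr <| Or.inr <| Or.inr <| Or.inr
            ⟨k, hk1, hk2, fun t ht => ?_⟩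
          have h := H t ht
          by_cases hz : sN k t + sN (k+1) t = 0
          · simp only [eN, hz, mul_zero]; exact Nat.zero_le _
          · have hd : dN a t = 0 := dzero a k t ha1 hk3 hk4 hk5 hka hka1 hka2 hka3 hz
            rw [hd, Nat.add_zero] at h
            exact h

lemma comb1 (n a γ δ : ℕ) (ha1 : 3 ≤ a) (hn : 2*a+2 ≤ n) (hγ : 1 < γ) (hδ : 1 < δ)
    (μ : ℕ → ℕ) (i j : ℕ) (hi1 : 1 ≤ i) (hi2 : i ≤ n-1) (hj1 : 1 ≤ j) (hj2 : j ≤ n-1)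
    (H : ∀ t, t < n → eN a γ δ i t + eN a γ δ j t ≤ μ t + dN a t) :
    (1 ≤ μ a) ∨ (δ-1 ≤ μ (a+1) ∧ δ-1 ≤ μ (a+2)) ∨ 1 ≤ μ (a+3)
    ∨ (1 ≤ μ 0 ∧ 1 ≤ μ 1) ∨ (1 ≤ μ 0 ∧ 1 ≤ μ 3) ∨ (1 ≤ μ 2 ∧ 1 ≤ μ 1) ∨ (1 ≤ μ 2 ∧ 1 ≤ μ 3)
    ∨ ∃ m, 1 ≤ m ∧ m ≤ n-1 ∧ ∀ t, t < n → eN a γ δ m t ≤ μ t := by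
  by_cases hi : i ≠ 1 ∧ i ≠ 2 ∧ (i = 3 → a = 3)
  · exact combA n a γ δ ha1 hn hγ hδ μ i hi1 hi2 hi
      (fun t ht => le_trans (Nat.le_add_right _ _) (H t ht))
  by_cases hj : j ≠ 1 ∧ j ≠ 2 ∧ (j = 3 → a = 3)
  · exact combA n a γ δ ha1 hn hγ hδ μ j hj1 hj2 hj
      (fun t ht => le_trans (Nat.le_add_left _ _) (H t ht))
  push_neg at hi hj
  have hi' : i = 1 ∨ i = 2 ∨ (i = 3 ∧ a ≠ 3) := by tauto
  have hj' : j = 1 ∨ j = 2 ∨ (j = 3 ∧ a ≠ 3) := by tauto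
  clear hi hj hi1 hi2 hj1 hj2
  have h0 := H 0 (by omega)
  have h1 := H 1 (by omega)
  have h2 := H 2 (by omega)
  have h3 := H 3 (by omega)
  clear H
  rcases hi' with rfl | rfl | ⟨rfl, ha3⟩ <;> rcases hj' with rfl | rfl | ⟨rfl, ha3'⟩ <;>
    simp only [eN,
      wN_one (show (1:ℕ) ≠ a by omega) (show (1:ℕ) ≠ a+2 by omega),
      wN_one (show (2:ℕ) ≠ a by omega) (show (2:ℕ) ≠ a+2 by omega),
      one_mul, dN, sN_eq] at h0 h1 h2 h3
  · exact Or.inr <| Or.inr <| Or.inr <| Or.inl ⟨by omega, by omega⟩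
  · exact Or.inr <| Or.inr <| Or.inr <| Or.inl ⟨by omega, by omega⟩
  · simp only [eN, wN_one (show (3:ℕ) ≠ a by omega) (show (3:ℕ) ≠ a+2 by omega),
      one_mul, dN, sN_eq] at h0 h3
    exact Or.inr <| Or.inr <| Or.inr <| Or.inr <| Or.inl ⟨by omega, by omega⟩
  · exact Or.inr <| Or.inr <| Or.inr <| Or.inl ⟨by omega, by omega⟩
  · exact Or.inr <| Or.inr <| Or.inr <| Or.inr <| Or.inr <| Or.inl ⟨by omega, by omega⟩
  · simp only [eN, wN_one (show (3:ℕ) ≠ a by omega) (show (3:ℕ) ≠ a+2 by omega),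
      one_mul, dN, sN_eq] at h2 h3
    exact Or.inr <| Or.inr <| Or.inr <| Or.inr <| Or.inr <| Or.inr <|
      Or.inl ⟨by omega, by omega⟩
  · simp only [eN, wN_one (show (3:ℕ) ≠ a by omega) (show (3:ℕ) ≠ a+2 by omega),
      one_mul, dN, sN_eq] at h0 h3
    exact Or.inr <| Or.inr <| Or.inr <| Or.inr <| Or.inl ⟨by omega, by omega⟩
  · simp only [eN, wN_one (show (3:ℕ) ≠ a by omega) (show (3:ℕ) ≠ a+2 by omega),
      one_mul, dN, sN_eq] at h2 h3
    exact Or.inr <| Or.inr <| Or.inr <| Or.inr <| Or.inr <| Or.inr <|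
      Or.inl ⟨by omega, by omega⟩
  · simp only [eN, wN_one (show (3:ℕ) ≠ a by omega) (show (3:ℕ) ≠ a+2 by omega),
      one_mul, dN, sN_eq] at h2 h3
    exact Or.inr <| Or.inr <| Or.inr <| Or.inr <| Or.inr <| Or.inr <|
      Or.inl ⟨by omega, by omega⟩

/-! ### exponent vectors -/

noncomputable def sgl (n i : ℕ) : Fin n →₀ ℕ :=
  if h : 1 ≤ i ∧ i ≤ n then Finsupp.single ⟨i - 1, by omega⟩ 1 else 0

lemma sgl_apply (n i : ℕ) (t : Fin n) :
    sgl n i t = if (t.val + 1 = i ∧ i ≤ n) then 1 else 0 := by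
  unfold sgl
  split_ifs with h h2 h2
  · rw [Finsupp.single_apply,
      if_pos (Fin.ext (by simp only [Fin.val_mk]; omega) : (⟨i-1, by omega⟩ : Fin n) = t)]
  · rw [Finsupp.single_apply, if_neg]
    intro he
    have := congrArg Fin.val he
    simp only [Fin.val_mk] at this
    omega
  · omega
  · rfl

lemma Xv_eq_monomial (n : ℕ) (K : Type*) [Field K] (i : ℕ) (h1 : 1 ≤ i) (h2 : i ≤ n) :
    Xv n K i = monomial (sgl n i) 1 := by
  unfold Xv sgl
  rw [dif_pos ⟨h1, h2⟩, dif_pos ⟨h1, h2⟩]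
  rfl

noncomputable def ev (n a γ δ k : ℕ) : Fin n →₀ ℕ := wN a γ δ k • (sgl n k + sgl n (k+1))

noncomputable def dd (n a : ℕ) : Fin n →₀ ℕ :=
  (sgl n 2 + sgl n 3) + (sgl n (a+2) + sgl n (a+3))

lemma pu_pow_eq (n : ℕ) (K : Type*) [Field K] (j w : ℕ) (h1 : 1 ≤ j) (h2 : j + 1 ≤ n) :
    pu n K j ^ w = monomial (w • (sgl n j + sgl n (j+1))) (1 : K) := by
  unfold pu
  rw [Xv_eq_monomial n K j h1 (by omega), Xv_eq_monomial n K (j+1) (by omega) h2,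
    monomial_mul, one_mul, monomial_pow, one_pow]

lemma pu_pow_ev (n : ℕ) (K : Type*) [Field K] (a γ δ j : ℕ) (h1 : 1 ≤ j) (h2 : j + 1 ≤ n) :
    pu n K j ^ (if j = a then γ else if j = a + 2 then δ else 1)
      = monomial (ev n a γ δ j) (1 : K) := by
  rw [pu_pow_eq n K j _ h1 h2]; rfl

lemma ev_apply (n a γ δ k : ℕ) (hk1 : 1 ≤ k) (hk2 : k + 1 ≤ n) (t : Fin n) :
    ev n a γ δ k t = eN a γ δ k t.val := by
  simp [ev, eN, sN, sgl_apply, smul_eq_mul, hk2, show k ≤ n by omega]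
  split_ifs <;> ring

lemma dd_apply (n a : ℕ) (h : a + 3 ≤ n) (t : Fin n) : dd n a t = dN a t.val := by
  simp only [dd, dN, sN, Finsupp.add_apply, sgl_apply,
    show 2 ≤ n by omega, show 3 ≤ n by omega, show a+2 ≤ n by omega, h, and_true]
  ring

def Eset (n a γ δ : ℕ) : Set (Fin n →₀ ℕ) := {s | ∃ j, 1 ≤ j ∧ j ≤ n-1 ∧ s = ev n a γ δ j}

lemma image_mul_image (n : ℕ) (K : Type*) [Field K] (A B : Set (Fin n →₀ ℕ)) :
    ((fun s => monomial s (1:K)) '' A) * ((fun s => monomial s (1:K)) '' B)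
      = (fun s => monomial s (1:K)) '' (A + B) := by
  ext z
  simp only [Set.mem_mul, Set.mem_image, Set.mem_add]
  constructor
  · rintro ⟨_, ⟨x, hx, rfl⟩, _, ⟨y, hy, rfl⟩, rfl⟩
    exact ⟨x + y, ⟨x, hx, y, hy, rfl⟩, by rw [monomial_mul, mul_one]⟩
  · rintro ⟨_, ⟨x, hx, y, hy, rfl⟩, rfl⟩
    exact ⟨_, ⟨x, hx, rfl⟩, _, ⟨y, hy, rfl⟩, by rw [monomial_mul, mul_one]⟩

lemma pathIdeal2_eq (n : ℕ) (K : Type*) [Field K] (a γ δ : ℕ) (hn : 2 ≤ n) :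
    pathIdeal2 n K a γ δ
      = Ideal.span ((fun s => monomial s (1:K)) '' Eset n a γ δ) := by
  unfold pathIdeal2
  congr 1
  ext p
  simp only [Set.mem_setOf_eq, Set.mem_image, Eset]
  constructor
  · rintro ⟨j, hj1, hj2, rfl⟩
    exact ⟨ev n a γ δ j, ⟨j, hj1, hj2, rfl⟩, (pu_pow_ev n K a γ δ j hj1 (by omega)).symm⟩
  · rintro ⟨_, ⟨j, hj1, hj2, rfl⟩, rfl⟩
    exact ⟨j, hj1, hj2, (pu_pow_ev n K a γ δ j hj1 (by omega)).symm⟩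

/-! ### pointwise inequalities for the easy inclusion -/

lemma sgl_sN (n i : ℕ) (h : i ≤ n) (t : Fin n) : sgl n i t = sN i t.val := by
  simp [sgl_apply, sN, h]

lemma L1 (a γ δ t : ℕ) (ha1 : 3 ≤ a) :
    eN a γ δ 2 t + eN a γ δ (a+1) t ≤ sN (a+1) t + dN a t := by
  simp only [eN, wN_one (show (2:ℕ) ≠ a by omega) (show (2:ℕ) ≠ a+2 by omega),
    wN_one (show a+1 ≠ a by omega) (show a+1 ≠ a+2 by omega), one_mul, sN_eq, dN]
  omega

lemma L2 (a γ δ t : ℕ) (ha1 : 3 ≤ a) (hδ : 1 < δ) :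
    eN a γ δ 2 t + eN a γ δ (a+2) t ≤ (δ-1) * (sN (a+2) t + sN (a+3) t) + dN a t := by
  have hX : sN (a+2) t + sN (a+3) t ≤ δ * (sN (a+2) t + sN (a+3) t) :=
    Nat.le_mul_of_pos_left _ (by omega)
  rw [Nat.sub_one_mul]
  simp only [eN, wN_a2, wN_one (show (2:ℕ) ≠ a by omega) (show (2:ℕ) ≠ a+2 by omega), one_mul]
  simp only [show a+2+1 = a+3 by omega]
  simp only [dN, sN_eq] at hX ⊢
  omega

lemma L3 (a γ δ t : ℕ) (ha1 : 3 ≤ a) :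
    eN a γ δ 2 t + eN a γ δ (a+3) t ≤ sN (a+4) t + dN a t := by
  simp only [eN, wN_one (show (2:ℕ) ≠ a by omega) (show (2:ℕ) ≠ a+2 by omega),
    wN_one (show a+3 ≠ a by omega) (show a+3 ≠ a+2 by omega), one_mul, sN_eq, dN]
  omega

lemma L4 (a γ δ t : ℕ) (ha1 : 3 ≤ a) :
    eN a γ δ 1 t + eN a γ δ 2 t ≤ (sN 1 t + sN 2 t) + dN a t := by
  simp only [eN, wN_one (show (2:ℕ) ≠ a by omega) (show (2:ℕ) ≠ a+2 by omega),
    wN_one (show (1:ℕ) ≠ a by omega) (show (1:ℕ) ≠ a+2 by omega), one_mul, sN_eq, dN]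
  omega

lemma L5a (γ δ t : ℕ) :
    eN 3 γ δ 1 t + eN 3 γ δ 4 t ≤ (sN 1 t + sN 4 t) + dN 3 t := by
  simp only [eN, wN_one (show (1:ℕ) ≠ 3 by omega) (show (1:ℕ) ≠ 3+2 by omega),
    wN_one (show (4:ℕ) ≠ 3 by omega) (show (4:ℕ) ≠ 3+2 by omega), one_mul, sN_eq, dN]
  omega

lemma L5b (a γ δ t : ℕ) (ha1 : 4 ≤ a) :
    eN a γ δ 1 t + eN a γ δ 3 t ≤ (sN 1 t + sN 4 t) + dN a t := by
  simp only [eN, wN_one (show (1:ℕ) ≠ a by omega) (show (1:ℕ) ≠ a+2 by omega),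
    wN_one (show (3:ℕ) ≠ a by omega) (show (3:ℕ) ≠ a+2 by omega), one_mul, sN_eq, dN]
  omega

lemma L6 (a γ δ t : ℕ) (ha1 : 3 ≤ a) :
    eN a γ δ 2 t + eN a γ δ 2 t ≤ (sN 3 t + sN 2 t) + dN a t := by
  simp only [eN, wN_one (show (2:ℕ) ≠ a by omega) (show (2:ℕ) ≠ a+2 by omega),
    one_mul, sN_eq, dN]
  omega

lemma L7a (γ δ t : ℕ) :
    eN 3 γ δ 2 t + eN 3 γ δ 4 t ≤ (sN 3 t + sN 4 t) + dN 3 t := by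
  simp only [eN, wN_one (show (2:ℕ) ≠ 3 by omega) (show (2:ℕ) ≠ 3+2 by omega),
    wN_one (show (4:ℕ) ≠ 3 by omega) (show (4:ℕ) ≠ 3+2 by omega), one_mul, sN_eq, dN]
  omega

lemma L7b (a γ δ t : ℕ) (ha1 : 4 ≤ a) :
    eN a γ δ 2 t + eN a γ δ 3 t ≤ (sN 3 t + sN 4 t) + dN a t := by
  simp only [eN, wN_one (show (2:ℕ) ≠ a by omega) (show (2:ℕ) ≠ a+2 by omega),
    wN_one (show (3:ℕ) ≠ a by omega) (show (3:ℕ) ≠ a+2 by omega), one_mul, sN_eq, dN]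
  omega

lemma L8 (a γ δ t : ℕ) (ha1 : 3 ≤ a) : eN a γ δ 2 t ≤ dN a t := by
  simp only [eN, wN_one (show (2:ℕ) ≠ a by omega) (show (2:ℕ) ≠ a+2 by omega),
    one_mul, sN_eq, dN]
  omega

/-- the easy inclusion, combinatorial form -/
lemma exists_pair (n a γ δ : ℕ) (ha1 : 3 ≤ a) (hn : 2*a+2 ≤ n) (hγ : 1 < γ) (hδ : 1 < δ)
    (g : Fin n →₀ ℕ)
    (hg : g ∈ ({sgl n (a+1), (δ-1) • (sgl n (a+2) + sgl n (a+3)), sgl n (a+4)} :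
          Set (Fin n →₀ ℕ))
        ∪ {s | ∃ i j : ℕ, i ≤ 1 ∧ 1 ≤ j ∧ j ≤ 2 ∧ s = sgl n (2*i+1) + sgl n (2*j)}
        ∪ Eset n a γ δ) :
    ∃ s ∈ Eset n a γ δ + Eset n a γ δ, s ≤ g + dd n a := by
  have mem2 : ev n a γ δ 2 ∈ Eset n a γ δ := ⟨2, by omega, by omega, rfl⟩
  have memk : ∀ k, 1 ≤ k → k ≤ n-1 → ev n a γ δ k ∈ Eset n a γ δ :=
    fun k h1 h2 => ⟨k, h1, h2, rfl⟩
  have ddap : ∀ t : Fin n, dd n a t = dN a t.val := dd_apply n a (by omega)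
  have evap : ∀ k, 1 ≤ k → k + 1 ≤ n → ∀ t : Fin n, ev n a γ δ k t = eN a γ δ k t.val :=
    fun k h1 h2 t => ev_apply n a γ δ k h1 h2 t
  rcases hg with (hg | hg) | hg
  · rcases hg with rfl | rfl | rfl
    · refine ⟨_, Set.add_mem_add mem2 (memk (a+1) (by omega) (by omega)), fun t => ?_⟩
      simp only [Finsupp.add_apply, Finsupp.add_apply, evap 2 (by omega) (by omega),
        evap (a+1) (by omega) (by omega), ddap, sgl_sN n (a+1) (by omega)]
      exact L1 a γ δ t.val ha1
    · refine ⟨_, Set.add_mem_add mem2 (memk (a+2) (by omega) (by omega)), fun t => ?_⟩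
      simp only [Finsupp.add_apply, Finsupp.add_apply, evap 2 (by omega) (by omega),
        evap (a+2) (by omega) (by omega), ddap, Finsupp.smul_apply, Finsupp.add_apply,
        sgl_sN n (a+2) (by omega), sgl_sN n (a+3) (by omega), smul_eq_mul]
      exact L2 a γ δ t.val ha1 hδ
    · refine ⟨_, Set.add_mem_add mem2 (memk (a+3) (by omega) (by omega)), fun t => ?_⟩
      simp only [Finsupp.add_apply, Finsupp.add_apply, evap 2 (by omega) (by omega),
        evap (a+3) (by omega) (by omega), ddap, sgl_sN n (a+4) (by omega)]
      exact L3 a γ δ t.val ha1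
  · obtain ⟨i, j, hi, hj1, hj2, rfl⟩ := hg
    interval_cases i <;> interval_cases j <;> norm_num
    · -- x1 x2 : pair (1,2)
      refine ⟨_, Set.add_mem_add (memk 1 (by omega) (by omega)) mem2, fun t => ?_⟩
      simp only [Finsupp.add_apply, Finsupp.add_apply, evap 1 (by omega) (by omega),
        evap 2 (by omega) (by omega), ddap, sgl_sN n 1 (by omega), sgl_sN n 2 (by omega)]
      exact L4 a γ δ t.val ha1
    · -- x1 x4
      by_cases ha3 : a = 3
      · subst ha3
        refine ⟨_, Set.add_mem_add (memk 1 (by omega) (by omega))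
          (memk 4 (by omega) (by omega)), fun t => ?_⟩
        simp only [Finsupp.add_apply, Finsupp.add_apply, evap 1 (by omega) (by omega),
          evap 4 (by omega) (by omega), ddap, sgl_sN n 1 (by omega), sgl_sN n 4 (by omega)]
        exact L5a γ δ t.val
      · refine ⟨_, Set.add_mem_add (memk 1 (by omega) (by omega))
          (memk 3 (by omega) (by omega)), fun t => ?_⟩
        simp only [Finsupp.add_apply, Finsupp.add_apply, evap 1 (by omega) (by omega),
          evap 3 (by omega) (by omega), ddap, sgl_sN n 1 (by omega), sgl_sN n 4 (by omega)]
        exact L5b a γ δ t.val (by omega)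
    · -- x3 x2 : pair (2,2)
      refine ⟨_, Set.add_mem_add mem2 mem2, fun t => ?_⟩
      simp only [Finsupp.add_apply, Finsupp.add_apply, evap 2 (by omega) (by omega),
        ddap, sgl_sN n 3 (by omega), sgl_sN n 2 (by omega)]
      exact L6 a γ δ t.val ha1
    · -- x3 x4
      by_cases ha3 : a = 3
      · subst ha3
        refine ⟨_, Set.add_mem_add mem2 (memk 4 (by omega) (by omega)), fun t => ?_⟩
        simp only [Finsupp.add_apply, Finsupp.add_apply, evap 2 (by omega) (by omega),
          evap 4 (by omega) (by omega), ddap, sgl_sN n 3 (by omega), sgl_sN n 4 (by omega)]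
        exact L7a γ δ t.val
      · refine ⟨_, Set.add_mem_add mem2 (memk 3 (by omega) (by omega)), fun t => ?_⟩
        simp only [Finsupp.add_apply, Finsupp.add_apply, evap 2 (by omega) (by omega),
          evap 3 (by omega) (by omega), ddap, sgl_sN n 3 (by omega), sgl_sN n 4 (by omega)]
        exact L7b a γ δ t.val (by omega)
  · obtain ⟨m, hm1, hm2, rfl⟩ := hg
    refine ⟨_, Set.add_mem_add mem2 (memk m hm1 hm2), fun t => ?_⟩
    simp only [Finsupp.add_apply, Finsupp.add_apply, evap 2 (by omega) (by omega), ddap]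
    have := L8 a γ δ t.val ha1
    omega

/-- For `3 ≤ a ≤ ⌊n/2⌋ - 1` and `γ, δ > 1`,
`I² : (u_2 u_{a+2}) = (x_{a+1}, (x_{a+2}x_{a+3})^{δ-1}, x_{a+4})
+ (x_{2p+1} x_{2q} : 0 ≤ p ≤ 1, 1 ≤ q ≤ 2) + I`. -/
theorem colon_square_two_weights (n : ℕ) (K : Type*) [Field K] (a γ δ : ℕ)
    (ha1 : 3 ≤ a) (ha2 : a ≤ n / 2 - 1) (hγ : 1 < γ) (hδ : 1 < δ) :
    (pathIdeal2 n K a γ δ ^ 2).colon (Ideal.span {pu n K 2 * pu n K (a + 2)}) =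
      Ideal.span {Xv n K (a + 1), (Xv n K (a + 2) * Xv n K (a + 3)) ^ (δ - 1),
          Xv n K (a + 4)} ⊔
        Ideal.span {q | ∃ i j : ℕ, i ≤ 1 ∧ 1 ≤ j ∧ j ≤ 2 ∧
          q = Xv n K (2 * i + 1) * Xv n K (2 * j)} ⊔
        pathIdeal2 n K a γ δ := by
  have hn : 2*a+2 ≤ n := by omega
  -- the multiplier is a monomial
  have hpu2 : pu n K 2 = monomial (sgl n 2 + sgl n 3) 1 := by
    unfold pu
    rw [show (2:ℕ)+1 = 3 from rfl, Xv_eq_monomial n K 2 (by omega) (by omega),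
      Xv_eq_monomial n K 3 (by omega) (by omega), monomial_mul, one_mul]
  have hpua : pu n K (a+2) = monomial (sgl n (a+2) + sgl n (a+3)) 1 := by
    unfold pu
    rw [show a+2+1 = a+3 by omega, Xv_eq_monomial n K (a+2) (by omega) (by omega),
      Xv_eq_monomial n K (a+3) (by omega) (by omega), monomial_mul, one_mul]
  have hm : pu n K 2 * pu n K (a + 2) = monomial (dd n a) 1 := by
    rw [hpu2, hpua, monomial_mul, one_mul]; rfl
  -- the square as a monomial ideal
  have hsq : pathIdeal2 n K a γ δ ^ 2
      = Ideal.span ((fun s => monomial s (1:K)) '' (Eset n a γ δ + Eset n a γ δ)) := by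
    rw [sq, pathIdeal2_eq n K a γ δ (by omega), Ideal.span_mul_span', image_mul_image]
  -- the right-hand side as a monomial ideal
  have h1 : ({Xv n K (a+1), (Xv n K (a+2) * Xv n K (a+3)) ^ (δ-1), Xv n K (a+4)} :
      Set (MvPolynomial (Fin n) K))
      = (fun s => monomial s (1:K)) ''
        {sgl n (a+1), (δ-1) • (sgl n (a+2) + sgl n (a+3)), sgl n (a+4)} := by
    have hp : (Xv n K (a+2) * Xv n K (a+3)) ^ (δ-1)
        = monomial ((δ-1) • (sgl n (a+2) + sgl n (a+3))) (1:K) := by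
      rw [Xv_eq_monomial n K (a+2) (by omega) (by omega),
        Xv_eq_monomial n K (a+3) (by omega) (by omega), monomial_mul, one_mul,
        monomial_pow, one_pow]
    rw [Set.image_insert_eq, Set.image_insert_eq, Set.image_singleton,
      Xv_eq_monomial n K (a+1) (by omega) (by omega),
      Xv_eq_monomial n K (a+4) (by omega) (by omega), hp]
  have h2 : {q | ∃ i j : ℕ, i ≤ 1 ∧ 1 ≤ j ∧ j ≤ 2 ∧ q = Xv n K (2*i+1) * Xv n K (2*j)}
      = (fun s => monomial s (1:K)) ''
        {s | ∃ i j : ℕ, i ≤ 1 ∧ 1 ≤ j ∧ j ≤ 2 ∧ s = sgl n (2*i+1) + sgl n (2*j)} := by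
    ext q
    simp only [Set.mem_setOf_eq, Set.mem_image]
    constructor
    · rintro ⟨i, j, hi, hj1, hj2, rfl⟩
      exact ⟨_, ⟨i, j, hi, hj1, hj2, rfl⟩,
        by rw [Xv_eq_monomial n K (2*i+1) (by omega) (by omega),
          Xv_eq_monomial n K (2*j) (by omega) (by omega), monomial_mul, one_mul]⟩
    · rintro ⟨_, ⟨i, j, hi, hj1, hj2, rfl⟩, rfl⟩
      exact ⟨i, j, hi, hj1, hj2,
        by rw [Xv_eq_monomial n K (2*i+1) (by omega) (by omega),
          Xv_eq_monomial n K (2*j) (by omega) (by omega), monomial_mul, one_mul]⟩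
  have hrhs : Ideal.span {Xv n K (a + 1), (Xv n K (a + 2) * Xv n K (a + 3)) ^ (δ - 1),
          Xv n K (a + 4)} ⊔
        Ideal.span {q | ∃ i j : ℕ, i ≤ 1 ∧ 1 ≤ j ∧ j ≤ 2 ∧
          q = Xv n K (2 * i + 1) * Xv n K (2 * j)} ⊔
        pathIdeal2 n K a γ δ
      = Ideal.span ((fun s => monomial s (1:K)) ''
          (({sgl n (a+1), (δ-1) • (sgl n (a+2) + sgl n (a+3)), sgl n (a+4)} :
            Set (Fin n →₀ ℕ))
          ∪ {s | ∃ i j : ℕ, i ≤ 1 ∧ 1 ≤ j ∧ j ≤ 2 ∧ s = sgl n (2*i+1) + sgl n (2*j)}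
          ∪ Eset n a γ δ)) := by
    rw [pathIdeal2_eq n K a γ δ (by omega), h1, h2, ← Ideal.span_union, ← Ideal.span_union,
      ← Set.image_union, ← Set.image_union]
  ext f
  rw [Ideal.mem_colon_span_singleton, hm, hsq, hrhs, mem_ideal_span_monomial_image,
    mem_ideal_span_monomial_image]
  constructor
  · -- hard inclusion
    intro h μ hμ
    have hx : μ + dd n a ∈ (f * monomial (dd n a) 1).support := by
      rw [mem_support_iff, coeff_mul_monomial, mul_one]
      exact mem_support_iff.mp hμ
    obtain ⟨s, hsE2, hle⟩ := h _ hx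
    obtain ⟨x, hx', y, hy', rfl⟩ := hsE2
    obtain ⟨i, hi1, hi2, rfl⟩ := hx'
    obtain ⟨j, hj1, hj2, rfl⟩ := hy'
    have H : ∀ t, t < n → eN a γ δ i t + eN a γ δ j t
        ≤ (fun t => if h : t < n then μ ⟨t, h⟩ else 0) t + dN a t := by
      intro t ht
      have h' := Finsupp.le_def.mp hle ⟨t, ht⟩
      rw [Finsupp.add_apply, Finsupp.add_apply, ev_apply n a γ δ i hi1 (by omega),
        ev_apply n a γ δ j hj1 (by omega), dd_apply n a (by omega)] at h'
      simpa [dif_pos ht] using h'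
    rcases comb1 n a γ δ ha1 hn hγ hδ _ i j hi1 hi2 hj1 hj2 H with
      hc|hc|hc|hc|hc|hc|hc|⟨m, hm1, hm2, hm3⟩
    · -- x_{a+1}
      rw [dif_pos (show a < n by omega)] at hc
      refine ⟨sgl n (a+1), Set.mem_union_left _ (Set.mem_union_left _ (by simp)),
        fun t => ?_⟩
      rw [sgl_sN n (a+1) (by omega)]
      simp only [sN]
      split_ifs with hteq
      · have ht : t = ⟨a, by omega⟩ := Fin.ext (by simp only [Fin.val_mk]; omega)
        rw [ht]; exact hc
      · exact Nat.zero_le _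
    · -- (x_{a+2} x_{a+3})^{δ-1}
      rw [dif_pos (show a+1 < n by omega), dif_pos (show a+2 < n by omega)] at hc
      refine ⟨(δ-1) • (sgl n (a+2) + sgl n (a+3)),
        Set.mem_union_left _ (Set.mem_union_left _ (by simp)), fun t => ?_⟩
      simp only [Finsupp.smul_apply, Finsupp.add_apply, sgl_sN n (a+2) (by omega),
        sgl_sN n (a+3) (by omega), smul_eq_mul, sN]
      split_ifs with hc1 hc2 hc2
      · omega
      · have ht : t = ⟨a+1, by omega⟩ := Fin.ext (by simp only [Fin.val_mk]; omega)
        rw [ht]; simpa using hc.1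
      · have ht : t = ⟨a+2, by omega⟩ := Fin.ext (by simp only [Fin.val_mk]; omega)
        rw [ht]; simpa using hc.2
      · simp
    · -- x_{a+4}
      rw [dif_pos (show a+3 < n by omega)] at hc
      refine ⟨sgl n (a+4), Set.mem_union_left _ (Set.mem_union_left _ (by simp)),
        fun t => ?_⟩
      rw [sgl_sN n (a+4) (by omega)]
      simp only [sN]
      split_ifs with hteq
      · have ht : t = ⟨a+3, by omega⟩ := Fin.ext (by simp only [Fin.val_mk]; omega)
        rw [ht]; exact hc
      · exact Nat.zero_le _
    · -- x1 x2
      rw [dif_pos (show 0 < n by omega), dif_pos (show 1 < n by omega)] at hc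
      refine ⟨sgl n 1 + sgl n 2,
        Set.mem_union_left _ (Set.mem_union_right _ ⟨0, 1, by omega, by omega, by omega,
          by norm_num⟩), fun t => ?_⟩
      simp only [Finsupp.add_apply, sgl_sN n 1 (by omega), sgl_sN n 2 (by omega), sN]
      split_ifs with hc1 hc2 hc2
      · omega
      · have ht : t = ⟨0, by omega⟩ := Fin.ext (by simp only [Fin.val_mk]; omega)
        rw [ht]; simpa using hc.1
      · have ht : t = ⟨1, by omega⟩ := Fin.ext (by simp only [Fin.val_mk]; omega)
        rw [ht]; simpa using hc.2
      · simp
    · -- x1 x4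
      rw [dif_pos (show 0 < n by omega), dif_pos (show 3 < n by omega)] at hc
      refine ⟨sgl n 1 + sgl n 4,
        Set.mem_union_left _ (Set.mem_union_right _ ⟨0, 2, by omega, by omega, by omega,
          by norm_num⟩), fun t => ?_⟩
      simp only [Finsupp.add_apply, sgl_sN n 1 (by omega), sgl_sN n 4 (by omega), sN]
      split_ifs with hc1 hc2 hc2
      · omega
      · have ht : t = ⟨0, by omega⟩ := Fin.ext (by simp only [Fin.val_mk]; omega)
        rw [ht]; simpa using hc.1
      · have ht : t = ⟨3, by omega⟩ := Fin.ext (by simp only [Fin.val_mk]; omega)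
        rw [ht]; simpa using hc.2
      · simp
    · -- x3 x2
      rw [dif_pos (show 2 < n by omega), dif_pos (show 1 < n by omega)] at hc
      refine ⟨sgl n 3 + sgl n 2,
        Set.mem_union_left _ (Set.mem_union_right _ ⟨1, 1, by omega, by omega, by omega,
          by norm_num⟩), fun t => ?_⟩
      simp only [Finsupp.add_apply, sgl_sN n 3 (by omega), sgl_sN n 2 (by omega), sN]
      split_ifs with hc1 hc2 hc2
      · omega
      · have ht : t = ⟨2, by omega⟩ := Fin.ext (by simp only [Fin.val_mk]; omega)
        rw [ht]; simpa using hc.1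
      · have ht : t = ⟨1, by omega⟩ := Fin.ext (by simp only [Fin.val_mk]; omega)
        rw [ht]; simpa using hc.2
      · simp
    · -- x3 x4
      rw [dif_pos (show 2 < n by omega), dif_pos (show 3 < n by omega)] at hc
      refine ⟨sgl n 3 + sgl n 4,
        Set.mem_union_left _ (Set.mem_union_right _ ⟨1, 2, by omega, by omega, by omega,
          by norm_num⟩), fun t => ?_⟩
      simp only [Finsupp.add_apply, sgl_sN n 3 (by omega), sgl_sN n 4 (by omega), sN]
      split_ifs with hc1 hc2 hc2
      · omega
      · have ht : t = ⟨2, by omega⟩ := Fin.ext (by simp only [Fin.val_mk]; omega)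
        rw [ht]; simpa using hc.1
      · have ht : t = ⟨3, by omega⟩ := Fin.ext (by simp only [Fin.val_mk]; omega)
        rw [ht]; simpa using hc.2
      · simp
    · -- an element of I
      refine ⟨ev n a γ δ m, Set.mem_union_right _ ⟨m, hm1, hm2, rfl⟩, fun t => ?_⟩
      rw [ev_apply n a γ δ m hm1 (by omega)]
      have := hm3 t.val t.isLt
      rw [dif_pos t.isLt] at this
      simpa using this
  · -- easy inclusion
    intro h ν hν
    have hc := mem_support_iff.mp hν
    rw [coeff_mul_monomial'] at hc
    split_ifs at hc with hdd
    · have hsup : ν - dd n a ∈ f.support := by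
        rw [mem_support_iff]
        intro h0
        rw [h0, zero_mul] at hc
        exact hc rfl
      obtain ⟨g, hgF, hgle⟩ := h _ hsup
      obtain ⟨s, hsE2, hsle⟩ := exists_pair n a γ δ ha1 hn hγ hδ g hgF
      refine ⟨s, hsE2, le_trans hsle ?_⟩
      calc g + dd n a ≤ (ν - dd n a) + dd n a := add_le_add_left hgle _
        _ = ν := tsub_add_cancel_of_le hdd
    · exact absurd rfl hc
end
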